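/- arXiv:2003.14301 — 3 statements merged into one kernel-verified Lean document; each statement's English description precedes it below -/
import Mathlib

section
/- (Subadditivity Theorem) If μ is a submodular capacity, then the Choquet integral is subadditive: (C)∫_Ω (f + g) dμ ≤ (C)∫_Ω f dμ + (C)∫_Ω g dμ for all bounded nonnegative measurable functions f, g on Ω. -/
open MeasureTheory ENNReal
open scoped Classical

/-- The Choquet integral of a nonnegative function `f` on a set `A` with respect
to a capacity `μ`. -/
noncomputable def choquet {Ω : Type*} (μ : Set Ω → ℝ) (f : Ω → ℝ) (A : Set Ω) : ℝ≥0∞ :=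
  ∫⁻ t in Set.Ioi (0:ℝ), ENNReal.ofReal (μ ({ω | t < f ω} ∩ A))

section Aux

variable {Ω : Type*} (μ : Set Ω → ℝ)

lemma choquet_aux_nonneg (h0 : μ ∅ = 0) (hmono : ∀ A B : Set Ω, A ⊆ B → μ A ≤ μ B)
    (A : Set Ω) : 0 ≤ μ A :=
  h0 ▸ hmono ∅ A (Set.empty_subset A)

/-- Key submodularity + telescoping lemma: adding one indicator. -/
lemma choquet_aux_lemA (h0 : μ ∅ = 0) (hmono : ∀ A B : Set Ω, A ⊆ B → μ A ≤ μ B)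
    (hsubmod : ∀ A B : Set Ω, μ (A ∪ B) + μ (A ∩ B) ≤ μ A + μ B)
    (F : Ω → ℕ) (A : Set Ω) (e : Ω → ℕ)
    (he1 : ∀ ω, ω ∈ A → e ω = 1) (he0 : ∀ ω, ω ∉ A → e ω = 0) (L : ℕ) :
    ∑ j ∈ Finset.range L, μ {ω | j + 1 ≤ F ω + e ω}
      ≤ ∑ j ∈ Finset.range L, μ {ω | j + 1 ≤ F ω} + μ A := by
  set D : ℕ → ℝ := fun j => μ ({ω | j ≤ F ω} ∩ A) with hD
  have key : ∀ j : ℕ, μ {ω | j + 1 ≤ F ω + e ω}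
      ≤ μ {ω | j + 1 ≤ F ω} + (D j - D (j + 1)) := by
    intro j
    have hu : {ω | j + 1 ≤ F ω} ∪ ({ω | j ≤ F ω} ∩ A)
        = {ω | j + 1 ≤ F ω + e ω} := by
      ext ω; by_cases h : ω ∈ A
      · simp only [Set.mem_union, Set.mem_inter_iff, Set.mem_setOf_eq, h, and_true, he1 ω h]
        omega
      · simp only [Set.mem_union, Set.mem_inter_iff, Set.mem_setOf_eq, h, and_false, or_false, add_zero, he0 ω h]
    have hi : {ω | j + 1 ≤ F ω} ∩ ({ω | j ≤ F ω} ∩ A)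
        = {ω | j + 1 ≤ F ω} ∩ A := by
      ext ω
      simp only [Set.mem_inter_iff, Set.mem_setOf_eq]
      constructor
      · rintro ⟨a, _, c⟩; exact ⟨a, c⟩
      · rintro ⟨a, c⟩; exact ⟨a, by omega, c⟩
    have h2 := hsubmod {ω | j + 1 ≤ F ω} ({ω | j ≤ F ω} ∩ A)
    rw [hu, hi] at h2
    simp only [hD]
    linarith
  calc ∑ j ∈ Finset.range L, μ {ω | j + 1 ≤ F ω + e ω}
      ≤ ∑ j ∈ Finset.range L, (μ {ω | j + 1 ≤ F ω} + (D j - D (j + 1))) :=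
        Finset.sum_le_sum fun j _ => key j
    _ = ∑ j ∈ Finset.range L, μ {ω | j + 1 ≤ F ω} + (D 0 - D L) := by
        rw [Finset.sum_add_distrib, Finset.sum_range_sub' D L]
    _ ≤ ∑ j ∈ Finset.range L, μ {ω | j + 1 ≤ F ω} + μ A := by
        have h1 : D 0 ≤ μ A := by
          apply hmono; intro ω hω; exact hω.2
        have h2 : 0 ≤ D L := choquet_aux_nonneg μ h0 hmono _
        linarith

/-- Discrete subadditivity of the Choquet sums for ℕ-valued functions. -/
lemma choquet_aux_lemB (h0 : μ ∅ = 0) (hmono : ∀ A B : Set Ω, A ⊆ B → μ A ≤ μ B)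
    (hsubmod : ∀ A B : Set Ω, μ (A ∪ B) + μ (A ∩ B) ≤ μ A + μ B)
    (F G : Ω → ℕ) (L KG : ℕ) (hG : ∀ ω, G ω ≤ KG) :
    ∑ j ∈ Finset.range L, μ {ω | j + 1 ≤ F ω + G ω}
      ≤ ∑ j ∈ Finset.range L, μ {ω | j + 1 ≤ F ω}
        + ∑ i ∈ Finset.range KG, μ {ω | i + 1 ≤ G ω} := by
  have main : ∀ m : ℕ,
      ∑ j ∈ Finset.range L, μ {ω | j + 1 ≤ F ω + min (G ω) m}
        ≤ ∑ j ∈ Finset.range L, μ {ω | j + 1 ≤ F ω}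
          + ∑ i ∈ Finset.range m, μ {ω | i + 1 ≤ G ω} := by
    intro m
    induction m with
    | zero => simp
    | succ m ih =>
      set e : Ω → ℕ := fun ω => min (G ω) (m + 1) - min (G ω) m with he
      have hstep : ∀ ω, F ω + min (G ω) (m + 1) = (F ω + min (G ω) m) + e ω := by
        intro ω; simp only [he]; omega
      have := choquet_aux_lemA μ h0 hmono hsubmod
        (fun ω => F ω + min (G ω) m) {ω | m + 1 ≤ G ω} e
        (fun ω h => by simp only [Set.mem_setOf_eq] at h; simp only [he]; omega)
        (fun ω h => by simp only [Set.mem_setOf_eq, not_le] at h; simp only [he]; omega) L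
      calc ∑ j ∈ Finset.range L, μ {ω | j + 1 ≤ F ω + min (G ω) (m + 1)}
          = ∑ j ∈ Finset.range L,
              μ {ω | j + 1 ≤ (F ω + min (G ω) m) + e ω} := by
            apply Finset.sum_congr rfl; intro j _
            congr 1; ext ω; rw [Set.mem_setOf_eq, Set.mem_setOf_eq, hstep ω]
        _ ≤ ∑ j ∈ Finset.range L, μ {ω | j + 1 ≤ F ω + min (G ω) m}
              + μ {ω | m + 1 ≤ G ω} := this
        _ ≤ (∑ j ∈ Finset.range L, μ {ω | j + 1 ≤ F ω}
              + ∑ i ∈ Finset.range m, μ {ω | i + 1 ≤ G ω}) + μ {ω | m + 1 ≤ G ω} := by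
            linarith
        _ = ∑ j ∈ Finset.range L, μ {ω | j + 1 ≤ F ω}
              + ∑ i ∈ Finset.range (m + 1), μ {ω | i + 1 ≤ G ω} := by
            rw [Finset.sum_range_succ]; ring
  have := main KG
  have heq : ∀ ω, min (G ω) KG = G ω := fun ω => min_eq_left (hG ω)
  simpa only [heq] using this

/-- Padding: extra terms of the Choquet sum vanish. -/
lemma choquet_aux_pad (h0 : μ ∅ = 0) (F : Ω → ℕ) (K L : ℕ)
    (hF : ∀ ω, F ω ≤ K) (hKL : K ≤ L) :
    ∑ j ∈ Finset.range L, μ {ω | j + 1 ≤ F ω}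
      = ∑ j ∈ Finset.range K, μ {ω | j + 1 ≤ F ω} := by
  refine (Finset.sum_subset (Finset.range_subset_range.2 hKL) ?_).symm
  intro j _ hj
  rw [Finset.mem_range, not_lt] at hj
  have : {ω | j + 1 ≤ F ω} = (∅ : Set Ω) := by
    ext ω; simp only [Set.mem_setOf_eq, Set.mem_empty_iff_false, iff_false, not_le]
    exact lt_of_le_of_lt (hF ω) (by omega)
  rw [this, h0]

/-- The dyadic partition of `(0, ∞)`. -/
lemma choquet_aux_partition (δ : ℝ) (hδ : 0 < δ) :
    Set.Ioi (0:ℝ) = ⋃ j : ℕ, Set.Ioc ((j : ℝ) * δ) (((j : ℝ) + 1) * δ) := by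
  ext x
  simp only [Set.mem_Ioi, Set.mem_iUnion, Set.mem_Ioc]
  constructor
  · intro hx
    have hxδ : 0 < x / δ := div_pos hx hδ
    set k := ⌈x / δ⌉₊ with hk
    have hk1 : 1 ≤ k := Nat.one_le_iff_ne_zero.2 (by positivity)
    refine ⟨k - 1, ?_, ?_⟩
    · have h2 : (k : ℝ) < x / δ + 1 := Nat.ceil_lt_add_one (le_of_lt hxδ)
      have hcast : ((k - 1 : ℕ) : ℝ) = (k : ℝ) - 1 := by
        rw [Nat.cast_sub hk1]; norm_num
      rw [hcast]
      have : (k : ℝ) - 1 < x / δ := by linarith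
      calc ((k:ℝ) - 1) * δ < (x / δ) * δ := by
            exact mul_lt_mul_of_pos_right this hδ
        _ = x := div_mul_cancel₀ x (ne_of_gt hδ)
    · have h2 : x / δ ≤ (k : ℝ) := Nat.le_ceil _
      have hcast : ((k - 1 : ℕ) : ℝ) + 1 = (k : ℝ) := by
        rw [Nat.cast_sub hk1]; norm_num
      rw [hcast]
      calc x = (x / δ) * δ := (div_mul_cancel₀ x (ne_of_gt hδ)).symm
        _ ≤ (k : ℝ) * δ := mul_le_mul_of_nonneg_right h2 (le_of_lt hδ)
  · rintro ⟨j, hj1, _⟩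
    have : (0:ℝ) ≤ (j : ℝ) * δ := mul_nonneg (Nat.cast_nonneg j) (le_of_lt hδ)
    linarith

lemma choquet_aux_disjoint (δ : ℝ) (hδ : 0 < δ) :
    Pairwise (Function.onFun Disjoint
      (fun j : ℕ => Set.Ioc ((j : ℝ) * δ) (((j : ℝ) + 1) * δ))) := by
  intro i j hij
  rcases lt_or_gt_of_ne hij with h | h
  · apply Set.Ioc_disjoint_Ioc.2
    have : ((i : ℝ) + 1) * δ ≤ (j : ℝ) * δ := by
      apply mul_le_mul_of_nonneg_right _ (le_of_lt hδ)
      have : (i : ℝ) + 1 ≤ (j : ℝ) := by exact_mod_cast h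
      linarith
    calc min (((i:ℝ)+1)*δ) (((j:ℝ)+1)*δ) ≤ ((i:ℝ)+1)*δ := min_le_left _ _
      _ ≤ (j:ℝ)*δ := this
      _ ≤ max ((i:ℝ)*δ) ((j:ℝ)*δ) := le_max_right _ _
  · apply Set.Ioc_disjoint_Ioc.2
    have : ((j : ℝ) + 1) * δ ≤ (i : ℝ) * δ := by
      apply mul_le_mul_of_nonneg_right _ (le_of_lt hδ)
      have : (j : ℝ) + 1 ≤ (i : ℝ) := by exact_mod_cast h
      linarith
    calc min (((i:ℝ)+1)*δ) (((j:ℝ)+1)*δ) ≤ ((j:ℝ)+1)*δ := min_le_right _ _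
      _ ≤ (i:ℝ)*δ := this
      _ ≤ max ((i:ℝ)*δ) ((j:ℝ)*δ) := le_max_left _ _

/-- Decomposition of the Choquet integral along the partition. -/
lemma choquet_aux_decomp (f : Ω → ℝ) (δ : ℝ) (hδ : 0 < δ) :
    choquet μ f Set.univ
      = ∑' j : ℕ, ∫⁻ t in Set.Ioc ((j : ℝ) * δ) (((j : ℝ) + 1) * δ),
          ENNReal.ofReal (μ {ω | t < f ω}) := by
  unfold choquet
  simp only [Set.inter_univ]
  rw [choquet_aux_partition δ hδ]
  exact lintegral_iUnion (fun j => measurableSet_Ioc) (choquet_aux_disjoint δ hδ) _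

/-- Upper bound of the Choquet integral by a discrete sum. -/
lemma choquet_aux_upper (hmono : ∀ A B : Set Ω, A ⊆ B → μ A ≤ μ B)
    (h : Ω → ℝ) (F : Ω → ℕ) (δ : ℝ) (hδ : 0 < δ)
    (hle : ∀ ω, h ω ≤ (F ω : ℝ) * δ) :
    choquet μ h Set.univ
      ≤ ∑' j : ℕ, ENNReal.ofReal (μ {ω | j + 1 ≤ F ω}) * ENNReal.ofReal δ := by
  rw [choquet_aux_decomp μ h δ hδ]
  apply ENNReal.tsum_le_tsum
  intro j
  have hbound : ∀ t ∈ Set.Ioc ((j : ℝ) * δ) (((j : ℝ) + 1) * δ),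
      ENNReal.ofReal (μ {ω | t < h ω}) ≤ ENNReal.ofReal (μ {ω | j + 1 ≤ F ω}) := by
    intro t ht
    apply ENNReal.ofReal_le_ofReal
    apply hmono
    intro ω hω
    simp only [Set.mem_setOf_eq] at hω ⊢
    by_contra hc
    push_neg at hc
    have hFj : (F ω : ℝ) ≤ (j : ℝ) := by exact_mod_cast (by omega : F ω ≤ j)
    have : h ω ≤ (j : ℝ) * δ :=
      le_trans (hle ω) (mul_le_mul_of_nonneg_right hFj (le_of_lt hδ))
    have := ht.1
    linarith
  calc ∫⁻ t in Set.Ioc ((j : ℝ) * δ) (((j : ℝ) + 1) * δ), ENNReal.ofReal (μ {ω | t < h ω})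
      ≤ ∫⁻ _ in Set.Ioc ((j : ℝ) * δ) (((j : ℝ) + 1) * δ),
          ENNReal.ofReal (μ {ω | j + 1 ≤ F ω}) :=
        setLIntegral_mono' measurableSet_Ioc hbound
    _ = ENNReal.ofReal (μ {ω | j + 1 ≤ F ω}) * ENNReal.ofReal δ := by
        rw [setLIntegral_const, Real.volume_Ioc]
        congr 1
        ring_nf
  
/-- Lower bound: the discrete sum is at most the Choquet integral plus `δ`. -/
lemma choquet_aux_lower (h0 : μ ∅ = 0) (h1 : μ Set.univ = 1)
    (hmono : ∀ A B : Set Ω, A ⊆ B → μ A ≤ μ B)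
    (f : Ω → ℝ) (F : Ω → ℕ) (δ : ℝ) (hδ : 0 < δ)
    (hge : ∀ ω (j : ℕ), j + 2 ≤ F ω → ((j : ℝ) + 1) * δ ≤ f ω) :
    ∑' j : ℕ, ENNReal.ofReal (μ {ω | j + 1 ≤ F ω}) * ENNReal.ofReal δ
      ≤ choquet μ f Set.univ + ENNReal.ofReal δ := by
  rw [tsum_eq_zero_add' ENNReal.summable]
  rw [choquet_aux_decomp μ f δ hδ, add_comm (∑' j : ℕ, _)]
  apply add_le_add
  · calc ENNReal.ofReal (μ {ω | 0 + 1 ≤ F ω}) * ENNReal.ofReal δ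
        ≤ 1 * ENNReal.ofReal δ := by
          apply mul_le_mul_left
          calc ENNReal.ofReal (μ {ω | 0 + 1 ≤ F ω}) ≤ ENNReal.ofReal (μ Set.univ) :=
                ENNReal.ofReal_le_ofReal (hmono _ _ (Set.subset_univ _))
            _ = 1 := by rw [h1]; exact ENNReal.ofReal_one
      _ = ENNReal.ofReal δ := one_mul _
  · apply ENNReal.tsum_le_tsum
    intro j
    have hsub : Set.Ioo ((j : ℝ) * δ) (((j : ℝ) + 1) * δ)
        ⊆ Set.Ioc ((j : ℝ) * δ) (((j : ℝ) + 1) * δ) := Set.Ioo_subset_Ioc_self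
    calc ENNReal.ofReal (μ {ω | j + 1 + 1 ≤ F ω}) * ENNReal.ofReal δ
        = ∫⁻ _ in Set.Ioo ((j : ℝ) * δ) (((j : ℝ) + 1) * δ),
            ENNReal.ofReal (μ {ω | j + 1 + 1 ≤ F ω}) := by
          rw [setLIntegral_const, Real.volume_Ioo]
          congr 1
          ring_nf
      _ ≤ ∫⁻ t in Set.Ioo ((j : ℝ) * δ) (((j : ℝ) + 1) * δ),
            ENNReal.ofReal (μ {ω | t < f ω}) := by
          apply setLIntegral_mono' measurableSet_Ioo
          intro t ht
          apply ENNReal.ofReal_le_ofReal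
          apply hmono
          intro ω hω
          simp only [Set.mem_setOf_eq] at hω ⊢
          have h2 : ((j : ℝ) + 1) * δ ≤ f ω := hge ω j (by omega)
          exact lt_of_lt_of_le ht.2 h2
      _ ≤ ∫⁻ t in Set.Ioc ((j : ℝ) * δ) (((j : ℝ) + 1) * δ),
            ENNReal.ofReal (μ {ω | t < f ω}) := lintegral_mono_set hsub

end Aux

/-- (Subadditivity Theorem) For a submodular capacity, the Choquet integral is
subadditive. -/
theorem choquet_integral_subadditive_of_submodular
    {Ω : Type*} [MeasurableSpace Ω] (μ : Set Ω → ℝ)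
    (h0 : μ ∅ = 0) (h1 : μ Set.univ = 1)
    (hmono : ∀ A B : Set Ω, A ⊆ B → μ A ≤ μ B)
    (hsubmod : ∀ A B : Set Ω, μ (A ∪ B) + μ (A ∩ B) ≤ μ A + μ B)
    (f g : Ω → ℝ) (hf : Measurable f) (hg : Measurable g)
    (hf0 : ∀ ω, 0 ≤ f ω) (hg0 : ∀ ω, 0 ≤ g ω)
    (Mf : ℝ) (hfb : ∀ ω, f ω ≤ Mf) (Mg : ℝ) (hgb : ∀ ω, g ω ≤ Mg) :
    choquet μ (fun ω => f ω + g ω) Set.univ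
      ≤ choquet μ f Set.univ + choquet μ g Set.univ := by
  by_cases hne : Nonempty Ω
  case neg =>
    -- Ω is empty: contradiction with μ ∅ = 0 and μ univ = 1
    exfalso
    have : (Set.univ : Set Ω) = ∅ := by
      simp [Set.eq_empty_iff_forall_notMem]
      intro x; exact hne ⟨x⟩
    rw [this, h0] at h1
    norm_num at h1
  obtain ⟨ω₀⟩ := hne
  have hMf : 0 ≤ Mf := le_trans (hf0 ω₀) (hfb ω₀)
  have hMg : 0 ≤ Mg := le_trans (hg0 ω₀) (hgb ω₀)
  -- the per-n inequality
  have key : ∀ n : ℕ, choquet μ (fun ω => f ω + g ω) Set.univ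
      ≤ choquet μ f Set.univ + choquet μ g Set.univ
        + 2 * ENNReal.ofReal (1 / (n + 1)) := by
    intro n
    set δ : ℝ := 1 / (n + 1) with hδdef
    have hδ : 0 < δ := by positivity
    set F : Ω → ℕ := fun ω => ⌊f ω / δ⌋₊ + 1 with hF
    set G : Ω → ℕ := fun ω => ⌊g ω / δ⌋₊ + 1 with hG
    set KF : ℕ := ⌊Mf / δ⌋₊ + 1 with hKF
    set KG : ℕ := ⌊Mg / δ⌋₊ + 1 with hKG
    have hFb : ∀ ω, F ω ≤ KF := fun ω => by
      simp only [hF, hKF, add_le_add_iff_right]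
      exact Nat.floor_le_floor (div_le_div_of_nonneg_right (hfb ω) hδ.le)
    have hGb : ∀ ω, G ω ≤ KG := fun ω => by
      simp only [hG, hKG, add_le_add_iff_right]
      exact Nat.floor_le_floor (div_le_div_of_nonneg_right (hgb ω) hδ.le)
    have hFle : ∀ ω, f ω < (F ω : ℝ) * δ := by
      intro ω
      have := Nat.lt_floor_add_one (f ω / δ)
      have h2 : f ω / δ < (F ω : ℝ) := by
        simp only [hF]; push_cast; linarith
      calc f ω = (f ω / δ) * δ := (div_mul_cancel₀ _ (ne_of_gt hδ)).symm
        _ < (F ω : ℝ) * δ := mul_lt_mul_of_pos_right h2 hδ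
    have hGle : ∀ ω, g ω < (G ω : ℝ) * δ := by
      intro ω
      have := Nat.lt_floor_add_one (g ω / δ)
      have h2 : g ω / δ < (G ω : ℝ) := by
        simp only [hG]; push_cast; linarith
      calc g ω = (g ω / δ) * δ := (div_mul_cancel₀ _ (ne_of_gt hδ)).symm
        _ < (G ω : ℝ) * δ := mul_lt_mul_of_pos_right h2 hδ
    have hFge : ∀ ω (j : ℕ), j + 2 ≤ F ω → ((j : ℝ) + 1) * δ ≤ f ω := by
      intro ω j hj
      have h2 : (j : ℕ) + 1 ≤ ⌊f ω / δ⌋₊ := by simp only [hF] at hj; omega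
      have h3 : ((j : ℝ) + 1) ≤ f ω / δ := by
        have := (Nat.le_floor_iff (div_nonneg (hf0 ω) hδ.le)).1 h2
        push_cast at this; linarith
      calc ((j : ℝ) + 1) * δ ≤ (f ω / δ) * δ := mul_le_mul_of_nonneg_right h3 (le_of_lt hδ)
        _ = f ω := div_mul_cancel₀ _ (ne_of_gt hδ)
    have hGge : ∀ ω (j : ℕ), j + 2 ≤ G ω → ((j : ℝ) + 1) * δ ≤ g ω := by
      intro ω j hj
      have h2 : (j : ℕ) + 1 ≤ ⌊g ω / δ⌋₊ := by simp only [hG] at hj; omega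
      have h3 : ((j : ℝ) + 1) ≤ g ω / δ := by
        have := (Nat.le_floor_iff (div_nonneg (hg0 ω) hδ.le)).1 h2
        push_cast at this; linarith
      calc ((j : ℝ) + 1) * δ ≤ (g ω / δ) * δ := mul_le_mul_of_nonneg_right h3 (le_of_lt hδ)
        _ = g ω := div_mul_cancel₀ _ (ne_of_gt hδ)
    set L : ℕ := KF + KG with hL
    have hFGb : ∀ ω, F ω + G ω ≤ L := fun ω => add_le_add (hFb ω) (hGb ω)
    -- step 1 : upper bound for f + g
    have step1 : choquet μ (fun ω => f ω + g ω) Set.univ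
        ≤ ∑' j : ℕ, ENNReal.ofReal (μ {ω | j + 1 ≤ F ω + G ω}) * ENNReal.ofReal δ := by
      apply choquet_aux_upper μ hmono _ (fun ω => F ω + G ω) δ hδ
      intro ω
      rw [Nat.cast_add, add_mul]
      exact add_le_add (hFle ω).le (hGle ω).le
    -- step 2 : discrete subadditivity, in ℝ≥0∞
    have hnn : ∀ (A : Set Ω), 0 ≤ μ A := choquet_aux_nonneg μ h0 hmono
    have tsum_finite : ∀ (H : Ω → ℕ), (∀ ω, H ω ≤ L) →
        ∑' j : ℕ, ENNReal.ofReal (μ {ω | j + 1 ≤ H ω})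
          = ENNReal.ofReal (∑ j ∈ Finset.range L, μ {ω | j + 1 ≤ H ω}) := by
      intro H hK
      have hzero : ∀ j ∉ Finset.range L, ENNReal.ofReal (μ {ω | j + 1 ≤ H ω}) = 0 := by
        intro j hj
        rw [Finset.mem_range, not_lt] at hj
        have : {ω | j + 1 ≤ H ω} = (∅ : Set Ω) := by
          ext ω; simp only [Set.mem_setOf_eq, Set.mem_empty_iff_false, iff_false, not_le]
          exact lt_of_le_of_lt (hK ω) (by omega)
        rw [this, h0]; simp
      rw [tsum_eq_sum hzero, ENNReal.ofReal_sum_of_nonneg (fun j _ => hnn _)]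
    have step2 : ∑' j : ℕ, ENNReal.ofReal (μ {ω | j + 1 ≤ F ω + G ω})
        ≤ ∑' j : ℕ, ENNReal.ofReal (μ {ω | j + 1 ≤ F ω})
          + ∑' j : ℕ, ENNReal.ofReal (μ {ω | j + 1 ≤ G ω}) := by
      rw [tsum_finite (fun ω => F ω + G ω) hFGb,
        tsum_finite F (fun ω => le_trans (hFb ω) (by omega)),
        tsum_finite G (fun ω => le_trans (hGb ω) (by omega)),
        ← ENNReal.ofReal_add (Finset.sum_nonneg fun j _ => hnn _)
          (Finset.sum_nonneg fun j _ => hnn _)]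
      apply ENNReal.ofReal_le_ofReal
      calc ∑ j ∈ Finset.range L, μ {ω | j + 1 ≤ F ω + G ω}
          ≤ ∑ j ∈ Finset.range L, μ {ω | j + 1 ≤ F ω}
            + ∑ i ∈ Finset.range KG, μ {ω | i + 1 ≤ G ω} :=
            choquet_aux_lemB μ h0 hmono hsubmod F G L KG hGb
        _ = ∑ j ∈ Finset.range L, μ {ω | j + 1 ≤ F ω}
            + ∑ i ∈ Finset.range L, μ {ω | i + 1 ≤ G ω} := by
            rw [choquet_aux_pad μ h0 G KG L hGb (by omega)]
    -- step 3 : lower bounds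
    have step3f : (∑' j : ℕ, ENNReal.ofReal (μ {ω | j + 1 ≤ F ω})) * ENNReal.ofReal δ
        ≤ choquet μ f Set.univ + ENNReal.ofReal δ := by
      rw [← ENNReal.tsum_mul_right]
      exact choquet_aux_lower μ h0 h1 hmono f F δ hδ hFge
    have step3g : (∑' j : ℕ, ENNReal.ofReal (μ {ω | j + 1 ≤ G ω})) * ENNReal.ofReal δ
        ≤ choquet μ g Set.univ + ENNReal.ofReal δ := by
      rw [← ENNReal.tsum_mul_right]
      exact choquet_aux_lower μ h0 h1 hmono g G δ hδ hGge
    calc choquet μ (fun ω => f ω + g ω) Set.univ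
        ≤ ∑' j : ℕ, ENNReal.ofReal (μ {ω | j + 1 ≤ F ω + G ω}) * ENNReal.ofReal δ := step1
      _ = (∑' j : ℕ, ENNReal.ofReal (μ {ω | j + 1 ≤ F ω + G ω})) * ENNReal.ofReal δ :=
          ENNReal.tsum_mul_right
      _ ≤ (∑' j : ℕ, ENNReal.ofReal (μ {ω | j + 1 ≤ F ω})
            + ∑' j : ℕ, ENNReal.ofReal (μ {ω | j + 1 ≤ G ω})) * ENNReal.ofReal δ :=
          mul_le_mul_left step2 _
      _ = (∑' j : ℕ, ENNReal.ofReal (μ {ω | j + 1 ≤ F ω})) * ENNReal.ofReal δ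
            + (∑' j : ℕ, ENNReal.ofReal (μ {ω | j + 1 ≤ G ω})) * ENNReal.ofReal δ :=
          add_mul _ _ _
      _ ≤ (choquet μ f Set.univ + ENNReal.ofReal δ)
            + (choquet μ g Set.univ + ENNReal.ofReal δ) := add_le_add step3f step3g
      _ = choquet μ f Set.univ + choquet μ g Set.univ + 2 * ENNReal.ofReal (1 / (n + 1)) := by
          rw [hδdef]; ring
  -- pass to the limit
  have htend : Filter.Tendsto
      (fun n : ℕ => choquet μ f Set.univ + choquet μ g Set.univ
        + 2 * ENNReal.ofReal (1 / (n + 1))) Filter.atTop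
      (nhds (choquet μ f Set.univ + choquet μ g Set.univ)) := by
    have h2 : Filter.Tendsto (fun n : ℕ => ENNReal.ofReal (1 / (n + 1))) Filter.atTop
        (nhds 0) := by
      have := tendsto_one_div_add_atTop_nhds_zero_nat (𝕜 := ℝ)
      have := (ENNReal.continuous_ofReal.tendsto 0).comp this
      simpa [Function.comp_def] using this
    have h3 : Filter.Tendsto (fun n : ℕ => 2 * ENNReal.ofReal (1 / (n + 1))) Filter.atTop
        (nhds 0) := by
      have := ENNReal.Tendsto.const_mul h2 (Or.inr (by norm_num : (2:ℝ≥0∞) ≠ ⊤))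
      simpa using this
    have h4 := Filter.Tendsto.add
      (tendsto_const_nhds : Filter.Tendsto
        (fun _ : ℕ => choquet μ f Set.univ + choquet μ g Set.univ) Filter.atTop _) h3
    simpa using h4
  exact ge_of_tendsto' htend key
end

section
/- Let μ be a submodular capacity and p ≥ 1. For a random function F : [0,1]² × Ω → ℝ and the bivariate random Bernstein polynomial B_{n₁,n₂}(F)(x₁,x₂,ω) = Σ_{k₁=0}^{n₁} Σ_{k₂=0}^{n₂} p_{k₁,n₁}(x₁) p_{k₂,n₂}(x₂) F(k₁/n₁, k₂/n₂, ω), one has the pointwise estimate (C)∫_Ω |F(x₁,x₂,ω) − B_{n₁,n₂}(F)(x₁,x₂,ω)|^p dμ ≤ Σ_{k₁,k₂} p_{k₁,n₁}(x₁) p_{k₂,n₂}(x₂) (C)∫_Ω |F(x₁,x₂,ω) − F(k₁/n₁,k₂/n₂,ω)|^p dμ. -/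
open MeasureTheory ENNReal

/-- Bernstein basis polynomial `p_{k,n}(x) = C(n,k) x^k (1-x)^{n-k}`. -/
noncomputable def bern (n k : ℕ) (x : ℝ) : ℝ := (n.choose k : ℝ) * x ^ k * (1 - x) ^ (n - k)


namespace ChoquetAux

variable {Ω : Type*}

/-- The Choquet integral over the whole space, with no intersection. -/
noncomputable def Ch (μ : Set Ω → ℝ) (f : Ω → ℝ) : ℝ≥0∞ :=
  ∫⁻ t in Set.Ioi (0:ℝ), ENNReal.ofReal (μ {ω | t < f ω})

lemma meas_aux {μ : Set Ω → ℝ} (hmono : ∀ A B : Set Ω, A ⊆ B → μ A ≤ μ B)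
    (S : ℝ → Set Ω) (hS : Antitone S) :
    Measurable fun t => ENNReal.ofReal (μ (S t)) := by
  have : Antitone fun t => ENNReal.ofReal (μ (S t)) := fun a b hab =>
    ENNReal.ofReal_le_ofReal (hmono _ _ (hS hab))
  exact this.measurable

lemma antitone_levels (f : Ω → ℝ) : Antitone fun t : ℝ => {ω | t < f ω} := by
  intro a b hab
  exact fun ω hω => lt_of_le_of_lt hab hω

lemma shift (G : ℝ → ℝ≥0∞) (ε : ℝ) :
    ∫⁻ t in Set.Ioi (0:ℝ), G (t - ε) = ∫⁻ t in Set.Ioi (-ε), G t := by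
  have h1 : ∀ t : ℝ, (Set.Ioi (0:ℝ)).indicator (fun t => G (t - ε)) t
      = (Set.Ioi (-ε)).indicator G (t - ε) := by
    intro t
    by_cases ht : t ∈ Set.Ioi (0:ℝ)
    · rw [Set.indicator_of_mem ht, Set.indicator_of_mem]
      simp only [Set.mem_Ioi] at ht ⊢; linarith
    · rw [Set.indicator_of_notMem ht, Set.indicator_of_notMem]
      simp only [Set.mem_Ioi] at ht ⊢; intro h; exact ht (by linarith)
  rw [← lintegral_indicator measurableSet_Ioi, ← lintegral_indicator measurableSet_Ioi]
  calc ∫⁻ t, (Set.Ioi (0:ℝ)).indicator (fun t => G (t - ε)) t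
      = ∫⁻ t, (Set.Ioi (-ε)).indicator G (t - ε) := by simp_rw [h1]
    _ = ∫⁻ t, (Set.Ioi (-ε)).indicator G t := lintegral_sub_right_eq_self _ ε

lemma scale (G : ℝ → ℝ≥0∞) (hG : Measurable G) {c : ℝ} (hc : 0 < c) :
    ∫⁻ t in Set.Ioi (0:ℝ), G (t / c) = ENNReal.ofReal c * ∫⁻ t in Set.Ioi (0:ℝ), G t := by
  have h1 : ∀ t : ℝ, (Set.Ioi (0:ℝ)).indicator (fun t => G (t / c)) t
      = (Set.Ioi (0:ℝ)).indicator G (c⁻¹ * t) := by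
    intro t
    by_cases ht : t ∈ Set.Ioi (0:ℝ)
    · rw [Set.indicator_of_mem ht, Set.indicator_of_mem]
      · rw [div_eq_inv_mul]
      · simp only [Set.mem_Ioi] at ht ⊢; positivity
    · rw [Set.indicator_of_notMem ht, Set.indicator_of_notMem]
      simp only [Set.mem_Ioi] at ht ⊢
      intro h
      exact ht (by nlinarith [inv_pos.mpr hc])
  rw [← lintegral_indicator measurableSet_Ioi, ← lintegral_indicator measurableSet_Ioi]
  have hH : Measurable ((Set.Ioi (0:ℝ)).indicator G) := hG.indicator measurableSet_Ioi
  calc ∫⁻ t, (Set.Ioi (0:ℝ)).indicator (fun t => G (t / c)) t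
      = ∫⁻ t, (Set.Ioi (0:ℝ)).indicator G (c⁻¹ * t) := by simp_rw [h1]
    _ = ∫⁻ x, (Set.Ioi (0:ℝ)).indicator G x ∂(Measure.map (c⁻¹ * ·) volume) :=
        (lintegral_map hH (measurable_const_mul _)).symm
    _ = ∫⁻ x, (Set.Ioi (0:ℝ)).indicator G x ∂(ENNReal.ofReal |c⁻¹⁻¹| • volume) := by
        rw [Real.map_volume_mul_left (by positivity : c⁻¹ ≠ 0)]
    _ = ENNReal.ofReal c * ∫⁻ t, (Set.Ioi (0:ℝ)).indicator G t := by
        rw [lintegral_smul_measure, inv_inv, abs_of_pos hc, smul_eq_mul]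


-- pointwise step approximation
lemma pointwise_steps (g : Ω → ℝ) {ε : ℝ} (hε : 0 < ε) (N : ℕ)
    (hgN : ∀ ω, g ω ≤ (N : ℝ) * ε) (ω : Ω) :
    g ω ≤ (∑ k ∈ Finset.Icc 1 N, Set.indicator {ω' | (k : ℝ) * ε < g ω'} (fun _ => ε) ω) + ε := by
  classical
  have hsum : (∑ k ∈ Finset.Icc 1 N, Set.indicator {ω' | (k : ℝ) * ε < g ω'} (fun _ => ε) ω)
      = ((Finset.Icc 1 N).filter (fun (k : ℕ) => (k : ℝ) * ε < g ω)).card * ε := by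
    calc (∑ k ∈ Finset.Icc 1 N, Set.indicator {ω' | (k : ℝ) * ε < g ω'} (fun _ => ε) ω)
        = ∑ k ∈ Finset.Icc 1 N, (if (k : ℝ) * ε < g ω then ε else 0) := by
          refine Finset.sum_congr rfl fun k _ => ?_
          simp [Set.indicator_apply]
      _ = ∑ _k ∈ (Finset.Icc 1 N).filter (fun (k : ℕ) => (k : ℝ) * ε < g ω), ε :=
          (Finset.sum_filter _ _).symm
      _ = _ := by rw [Finset.sum_const, nsmul_eq_mul]
  rw [hsum]
  set m := ((Finset.Icc 1 N).filter (fun (k : ℕ) => (k : ℝ) * ε < g ω)).card with hm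
  by_contra hcon
  push_neg at hcon
  have hmN : ((m : ℝ) + 1) * ε < g ω := by push_cast; nlinarith
  have hm1N : m + 1 ≤ N := by
    by_contra hh
    push_neg at hh
    have : (N : ℝ) ≤ (m : ℝ) := by exact_mod_cast Nat.lt_succ_iff.mp hh
    nlinarith [hgN ω]
  have hsubset : Finset.Icc 1 (m + 1) ⊆
      (Finset.Icc 1 N).filter (fun (k : ℕ) => (k : ℝ) * ε < g ω) := by
    intro j hj
    simp only [Finset.mem_Icc] at hj
    refine Finset.mem_filter.mpr ⟨Finset.mem_Icc.mpr ⟨hj.1, le_trans hj.2 hm1N⟩, ?_⟩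
    have hjm : (j : ℝ) ≤ (m : ℝ) + 1 := by exact_mod_cast hj.2
    nlinarith
  have hcard := Finset.card_le_card hsubset
  rw [Nat.card_Icc, ← hm] at hcard
  omega


section
variable {μ : Set Ω → ℝ} (h0 : μ ∅ = 0) (h1 : μ Set.univ = 1)
  (hmono : ∀ A B : Set Ω, A ⊆ B → μ A ≤ μ B)
  (hsubmod : ∀ A B : Set Ω, μ (A ∪ B) + μ (A ∩ B) ≤ μ A + μ B)

include hmono

lemma Ch_mono {f g : Ω → ℝ} (h : ∀ ω, f ω ≤ g ω) : Ch μ f ≤ Ch μ g := by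
  refine lintegral_mono fun t => ENNReal.ofReal_le_ofReal (hmono _ _ ?_)
  exact fun ω hω => lt_of_lt_of_le hω (h ω)

include h1 in
lemma Ch_add_const_le (f : Ω → ℝ) {c : ℝ} (hc : 0 ≤ c) :
    Ch μ (fun ω => f ω + c) ≤ Ch μ f + ENNReal.ofReal c := by
  have hle1 : ∀ A : Set Ω, ENNReal.ofReal (μ A) ≤ 1 := by
    intro A
    calc ENNReal.ofReal (μ A) ≤ ENNReal.ofReal (μ Set.univ) :=
          ENNReal.ofReal_le_ofReal (hmono _ _ (Set.subset_univ A))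
      _ = 1 := by rw [h1, ENNReal.ofReal_one]
  have hdisj : Disjoint (Set.Ioc (-c) (0:ℝ)) (Set.Ioi (0:ℝ)) := by
    rw [Set.disjoint_left]; intro t ht ht'
    simp only [Set.mem_Ioc, Set.mem_Ioi] at ht ht'; linarith [ht.2]
  calc Ch μ (fun ω => f ω + c)
      = ∫⁻ t in Set.Ioi (0:ℝ), ENNReal.ofReal (μ {ω | t - c < f ω}) := by
        unfold Ch
        congr 1; ext t; congr 2; ext ω
        simp only [Set.mem_setOf_eq]
        constructor <;> intro <;> linarith
    _ = ∫⁻ t in Set.Ioi (-c), ENNReal.ofReal (μ {ω | t < f ω}) :=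
        shift (fun s => ENNReal.ofReal (μ {ω | s < f ω})) c
    _ = (∫⁻ t in Set.Ioc (-c) 0, ENNReal.ofReal (μ {ω | t < f ω}))
        + ∫⁻ t in Set.Ioi (0:ℝ), ENNReal.ofReal (μ {ω | t < f ω}) := by
        rw [← lintegral_union measurableSet_Ioi hdisj, Set.Ioc_union_Ioi_eq_Ioi (by linarith)]
    _ ≤ ENNReal.ofReal c + Ch μ f := by
        refine add_le_add ?_ le_rfl
        calc ∫⁻ t in Set.Ioc (-c) 0, ENNReal.ofReal (μ {ω | t < f ω})
            ≤ ∫⁻ _t in Set.Ioc (-c) 0, 1 := lintegral_mono fun t => hle1 _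
          _ = volume (Set.Ioc (-c) 0) := setLIntegral_one _
          _ = ENNReal.ofReal c := by rw [Real.volume_Ioc]; norm_num
    _ = Ch μ f + ENNReal.ofReal c := add_comm _ _


include h0 hsubmod in
lemma Ch_add_indicator_le (f : Ω → ℝ) (A : Set Ω) {ε : ℝ} (hε : 0 < ε) :
    Ch μ (fun ω => f ω + Set.indicator A (fun _ => ε) ω) ≤
      Ch μ f + ENNReal.ofReal (ε * μ A) := by
  have hnn : ∀ B : Set Ω, 0 ≤ μ B := fun B => h0 ▸ hmono _ _ (Set.empty_subset B)
  set X : ℝ → Set Ω := fun t => {ω | t < f ω} with hX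
  set Y : ℝ → Set Ω := fun t => A ∩ {ω | t - ε < f ω} with hY
  -- level set identity
  have hlev : ∀ t : ℝ, {ω | t < f ω + Set.indicator A (fun _ => ε) ω} = X t ∪ Y t := by
    intro t
    ext ω
    by_cases hω : ω ∈ A
    · simp only [Set.mem_setOf_eq, Set.indicator_of_mem hω, Set.mem_union, hX, hY,
        Set.mem_inter_iff, hω, true_and]
      constructor
      · intro h; right; linarith
      · rintro (h | h) <;> linarith
    · simp only [Set.mem_setOf_eq, Set.indicator_of_notMem hω, Set.mem_union, hX, hY,
        Set.mem_inter_iff, hω, false_and, or_false, add_zero]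
  -- pointwise submodularity inequality
  have hpt : ∀ t : ℝ,
      ENNReal.ofReal (μ (X t ∪ Y t)) + ENNReal.ofReal (μ (A ∩ X t)) ≤
      ENNReal.ofReal (μ (X t)) + ENNReal.ofReal (μ (A ∩ {ω | t - ε < f ω})) := by
    intro t
    rw [← ENNReal.ofReal_add (hnn _) (hnn _), ← ENNReal.ofReal_add (hnn _) (hnn _)]
    apply ENNReal.ofReal_le_ofReal
    have hXY : X t ∩ Y t = A ∩ X t := by
      rw [hX, hY]
      ext ω
      simp only [Set.mem_inter_iff, Set.mem_setOf_eq]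
      constructor
      · rintro ⟨h1', h2', _⟩; exact ⟨h2', h1'⟩
      · rintro ⟨h1', h2'⟩; exact ⟨h2', h1', by linarith⟩
    calc μ (X t ∪ Y t) + μ (A ∩ X t) = μ (X t ∪ Y t) + μ (X t ∩ Y t) := by rw [hXY]
      _ ≤ μ (X t) + μ (Y t) := hsubmod _ _
  -- measurability facts
  have hmeas1 : Measurable fun t => ENNReal.ofReal (μ (X t ∪ Y t)) := by
    apply meas_aux hmono
    intro a b hab ω hω
    rcases hω with h | h
    · exact Or.inl (antitone_levels f hab h)
    · refine Or.inr ⟨h.1, ?_⟩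
      have h2 : b - ε < f ω := h.2
      show a - ε < f ω
      linarith
  have hmeas2 : Measurable fun t => ENNReal.ofReal (μ (A ∩ X t)) := by
    apply meas_aux hmono
    intro a b hab ω hω
    exact ⟨hω.1, antitone_levels f hab hω.2⟩
  -- integrate the pointwise inequality
  have hint : Ch μ (fun ω => f ω + Set.indicator A (fun _ => ε) ω)
      + (∫⁻ t in Set.Ioi (0:ℝ), ENNReal.ofReal (μ (A ∩ X t)))
      ≤ Ch μ f + ∫⁻ t in Set.Ioi (0:ℝ), ENNReal.ofReal (μ (A ∩ {ω | t - ε < f ω})) := by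
    have lhs_eq : Ch μ (fun ω => f ω + Set.indicator A (fun _ => ε) ω)
        + (∫⁻ t in Set.Ioi (0:ℝ), ENNReal.ofReal (μ (A ∩ X t)))
        = ∫⁻ t in Set.Ioi (0:ℝ),
            (ENNReal.ofReal (μ (X t ∪ Y t)) + ENNReal.ofReal (μ (A ∩ X t))) := by
      rw [lintegral_add_left hmeas1]
      unfold Ch
      congr 1
      refine lintegral_congr fun t => ?_
      rw [hlev t]
    have rhs_eq : Ch μ f + (∫⁻ t in Set.Ioi (0:ℝ), ENNReal.ofReal (μ (A ∩ {ω | t - ε < f ω})))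
        = ∫⁻ t in Set.Ioi (0:ℝ),
            (ENNReal.ofReal (μ (X t)) + ENNReal.ofReal (μ (A ∩ {ω | t - ε < f ω}))) := by
      rw [lintegral_add_left (meas_aux hmono _ (antitone_levels f))]
      rfl
    rw [lhs_eq, rhs_eq]
    exact lintegral_mono fun t => hpt t
  -- shift estimate for the right integral
  have hshift : (∫⁻ t in Set.Ioi (0:ℝ), ENNReal.ofReal (μ (A ∩ {ω | t - ε < f ω})))
      ≤ ENNReal.ofReal (ε * μ A) + ∫⁻ t in Set.Ioi (0:ℝ), ENNReal.ofReal (μ (A ∩ X t)) := by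
    have hdisj : Disjoint (Set.Ioc (-ε) (0:ℝ)) (Set.Ioi (0:ℝ)) := by
      rw [Set.disjoint_left]; intro t ht ht'
      simp only [Set.mem_Ioc, Set.mem_Ioi] at ht ht'; linarith [ht.2]
    calc (∫⁻ t in Set.Ioi (0:ℝ), ENNReal.ofReal (μ (A ∩ {ω | t - ε < f ω})))
        = ∫⁻ t in Set.Ioi (-ε), ENNReal.ofReal (μ (A ∩ {ω | t < f ω})) :=
          shift (fun s => ENNReal.ofReal (μ (A ∩ {ω | s < f ω}))) ε
      _ = (∫⁻ t in Set.Ioc (-ε) 0, ENNReal.ofReal (μ (A ∩ {ω | t < f ω})))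
          + ∫⁻ t in Set.Ioi (0:ℝ), ENNReal.ofReal (μ (A ∩ {ω | t < f ω})) := by
          rw [← lintegral_union measurableSet_Ioi hdisj,
            Set.Ioc_union_Ioi_eq_Ioi (by linarith : -ε ≤ (0:ℝ))]
      _ ≤ ENNReal.ofReal (ε * μ A) + ∫⁻ t in Set.Ioi (0:ℝ), ENNReal.ofReal (μ (A ∩ X t)) := by
          refine add_le_add ?_ le_rfl
          calc (∫⁻ t in Set.Ioc (-ε) 0, ENNReal.ofReal (μ (A ∩ {ω | t < f ω})))
              ≤ ∫⁻ _t in Set.Ioc (-ε) 0, ENNReal.ofReal (μ A) :=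
                lintegral_mono fun t =>
                  ENNReal.ofReal_le_ofReal (hmono _ _ Set.inter_subset_left)
            _ = ENNReal.ofReal (μ A) * volume (Set.Ioc (-ε) 0) := setLIntegral_const _ _
            _ = ENNReal.ofReal (ε * μ A) := by
                rw [Real.volume_Ioc, ← ENNReal.ofReal_mul (hnn A)]
                ring_nf
  -- combine and cancel
  by_cases hI : (∫⁻ t in Set.Ioi (0:ℝ), ENNReal.ofReal (μ (A ∩ X t))) = ⊤
  · have : Ch μ f = ⊤ := by
      refine top_unique ?_
      rw [← hI]
      exact lintegral_mono fun t =>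
        ENNReal.ofReal_le_ofReal (hmono _ _ Set.inter_subset_right)
    rw [this]
    simp
  · have h2 : Ch μ (fun ω => f ω + Set.indicator A (fun _ => ε) ω)
        + (∫⁻ t in Set.Ioi (0:ℝ), ENNReal.ofReal (μ (A ∩ X t)))
        ≤ (Ch μ f + ENNReal.ofReal (ε * μ A))
          + (∫⁻ t in Set.Ioi (0:ℝ), ENNReal.ofReal (μ (A ∩ X t))) := by
      refine le_trans hint (le_trans (add_le_add le_rfl hshift) (le_of_eq ?_))
      ring
    exact (ENNReal.add_le_add_iff_right hI).mp h2


include h0 hsubmod in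
lemma Ch_add_steps {ι : Type*} (s : Finset ι) (A : ι → Set Ω) (f : Ω → ℝ)
    {ε : ℝ} (hε : 0 < ε) :
    Ch μ (fun ω => f ω + ∑ k ∈ s, Set.indicator (A k) (fun _ => ε) ω) ≤
      Ch μ f + ∑ k ∈ s, ENNReal.ofReal (ε * μ (A k)) := by
  classical
  induction s using Finset.cons_induction with
  | empty => simpa using le_rfl
  | cons a s ha ih =>
    rw [Finset.sum_cons]
    have heq : (fun ω => f ω + ∑ k ∈ Finset.cons a s ha, Set.indicator (A k) (fun _ => ε) ω)
        = fun ω => (f ω + ∑ k ∈ s, Set.indicator (A k) (fun _ => ε) ω)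
            + Set.indicator (A a) (fun _ => ε) ω := by
      funext ω; rw [Finset.sum_cons]; ring
    rw [heq]
    calc Ch μ (fun ω => (f ω + ∑ k ∈ s, Set.indicator (A k) (fun _ => ε) ω)
            + Set.indicator (A a) (fun _ => ε) ω)
        ≤ Ch μ (fun ω => f ω + ∑ k ∈ s, Set.indicator (A k) (fun _ => ε) ω)
          + ENNReal.ofReal (ε * μ (A a)) :=
          Ch_add_indicator_le h0 hmono hsubmod _ _ hε
      _ ≤ (Ch μ f + ∑ k ∈ s, ENNReal.ofReal (ε * μ (A k))) + ENNReal.ofReal (ε * μ (A a)) :=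
          add_le_add ih le_rfl
      _ = Ch μ f + (ENNReal.ofReal (ε * μ (A a)) + ∑ k ∈ s, ENNReal.ofReal (ε * μ (A k))) := by
          ring

-- lower bound for Ch g by Riemann-type sums
include h0 in
lemma steps_le_Ch (g : Ω → ℝ) {ε : ℝ} (hε : 0 < ε) (N : ℕ) :
    ∑ k ∈ Finset.Icc 1 N, ENNReal.ofReal (ε * μ {ω | (k : ℝ) * ε < g ω}) ≤ Ch μ g := by
  classical
  set I : ℕ → Set ℝ := fun k => Set.Ioc ((k : ℝ) * ε - ε) ((k : ℝ) * ε) with hI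
  have hIdisj : (↑(Finset.Icc 1 N) : Set ℕ).PairwiseDisjoint I := by
    intro j hj k hk hjk
    apply Set.disjoint_left.mpr
    intro t htj htk
    simp only [hI, Set.mem_Ioc] at htj htk
    rcases lt_or_gt_of_ne hjk with h | h
    · have : (j : ℝ) + 1 ≤ (k : ℝ) := by exact_mod_cast Nat.succ_le_of_lt h
      nlinarith [htj.2, htk.1]
    · have : (k : ℝ) + 1 ≤ (j : ℝ) := by exact_mod_cast Nat.succ_le_of_lt h
      nlinarith [htj.1, htk.2]
  have hImeas : ∀ k ∈ Finset.Icc 1 N, MeasurableSet (I k) := fun k _ => measurableSet_Ioc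
  have hsub : (⋃ k ∈ Finset.Icc 1 N, I k) ⊆ Set.Ioi (0:ℝ) := by
    intro t ht
    simp only [Set.mem_iUnion] at ht
    obtain ⟨k, hk, htk⟩ := ht
    simp only [Finset.mem_Icc] at hk
    simp only [hI, Set.mem_Ioc] at htk
    have : (1 : ℝ) ≤ (k : ℝ) := by exact_mod_cast hk.1
    simp only [Set.mem_Ioi]
    nlinarith [htk.1]
  calc ∑ k ∈ Finset.Icc 1 N, ENNReal.ofReal (ε * μ {ω | (k : ℝ) * ε < g ω})
      ≤ ∑ k ∈ Finset.Icc 1 N, ∫⁻ t in I k, ENNReal.ofReal (μ {ω | t < g ω}) := by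
        refine Finset.sum_le_sum fun k hk => ?_
        calc ENNReal.ofReal (ε * μ {ω | (k : ℝ) * ε < g ω})
            = ENNReal.ofReal (μ {ω | (k : ℝ) * ε < g ω}) * volume (I k) := by
              rw [hI, Real.volume_Ioc, ← ENNReal.ofReal_mul
                (h0 ▸ hmono _ _ (Set.empty_subset _))]
              ring_nf
          _ = ∫⁻ _t in I k, ENNReal.ofReal (μ {ω | (k : ℝ) * ε < g ω}) :=
              (setLIntegral_const _ _).symm
          _ ≤ ∫⁻ t in I k, ENNReal.ofReal (μ {ω | t < g ω}) := by
              refine setLIntegral_mono (meas_aux hmono _ (antitone_levels g)) fun t ht => ?_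
              refine ENNReal.ofReal_le_ofReal (hmono _ _ fun ω hω => ?_)
              simp only [hI, Set.mem_Ioc] at ht
              simp only [Set.mem_setOf_eq] at hω ⊢
              linarith [ht.2]
    _ = ∫⁻ t in ⋃ k ∈ Finset.Icc 1 N, I k, ENNReal.ofReal (μ {ω | t < g ω}) :=
        (lintegral_biUnion_finset hIdisj hImeas _).symm
    _ ≤ Ch μ g := lintegral_mono_set hsub


include h0 h1 hsubmod in
lemma Ch_add_le_of_bounded (f g : Ω → ℝ) (B : ℝ) (hgB : ∀ ω, g ω ≤ B) :
    Ch μ (fun ω => f ω + g ω) ≤ Ch μ f + Ch μ g := by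
  refine ENNReal.le_of_forall_pos_le_add fun δ hδ _hfin => ?_
  have hδR : (0:ℝ) < (δ : ℝ) := hδ
  obtain ⟨N, hN⟩ : ∃ N : ℕ, B ≤ (N : ℝ) * (δ : ℝ) := by
    refine ⟨⌈B / (δ : ℝ)⌉₊, ?_⟩
    rcases le_or_gt B 0 with hB | hB
    · exact le_trans hB (by positivity)
    · rw [← div_le_iff₀ hδR]
      exact Nat.le_ceil _
  have hstep : ∀ ω, f ω + g ω ≤
      (f ω + ∑ k ∈ Finset.Icc 1 N, Set.indicator {ω' | (k : ℝ) * (δ:ℝ) < g ω'}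
        (fun _ => (δ:ℝ)) ω) + (δ:ℝ) := by
    intro ω
    have := pointwise_steps g hδR N (fun ω' => le_trans (hgB ω') hN) ω
    linarith
  calc Ch μ (fun ω => f ω + g ω)
      ≤ Ch μ (fun ω => (f ω + ∑ k ∈ Finset.Icc 1 N, Set.indicator {ω' | (k : ℝ) * (δ:ℝ) < g ω'}
          (fun _ => (δ:ℝ)) ω) + (δ:ℝ)) := Ch_mono hmono hstep
    _ ≤ Ch μ (fun ω => f ω + ∑ k ∈ Finset.Icc 1 N, Set.indicator {ω' | (k : ℝ) * (δ:ℝ) < g ω'}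
          (fun _ => (δ:ℝ)) ω) + ENNReal.ofReal (δ:ℝ) :=
        Ch_add_const_le h1 hmono _ (le_of_lt hδR)
    _ ≤ (Ch μ f + ∑ k ∈ Finset.Icc 1 N,
          ENNReal.ofReal ((δ:ℝ) * μ {ω' | (k : ℝ) * (δ:ℝ) < g ω'})) + ENNReal.ofReal (δ:ℝ) :=
        add_le_add (Ch_add_steps h0 hmono hsubmod _ _ _ hδR) le_rfl
    _ ≤ (Ch μ f + Ch μ g) + ENNReal.ofReal (δ:ℝ) :=
        add_le_add (add_le_add le_rfl (steps_le_Ch h0 hmono g hδR N)) le_rfl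
    _ = Ch μ f + Ch μ g + ↑δ := by rw [ENNReal.ofReal_coe_nnreal]


include h0 in
lemma Ch_zero : Ch μ (fun _ => (0:ℝ)) = 0 := by
  unfold Ch
  have heq : ∀ᵐ t ∂volume, t ∈ Set.Ioi (0:ℝ) →
      ENNReal.ofReal (μ {ω : Ω | t < (0:ℝ)}) = (0:ℝ≥0∞) := by
    refine Filter.Eventually.of_forall fun t ht => ?_
    have h2 : {ω : Ω | t < (0:ℝ)} = ∅ := by
      ext ω; simp only [Set.mem_setOf_eq, Set.mem_empty_iff_false, iff_false, not_lt]
      exact le_of_lt (Set.mem_Ioi.mp ht)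
    rw [h2, h0]
    simp
  rw [setLIntegral_congr_fun_ae measurableSet_Ioi heq]
  simp

include h0 h1 hsubmod in
lemma Ch_add_le (f g : Ω → ℝ) (hf0 : ∀ ω, 0 ≤ f ω) (hg0 : ∀ ω, 0 ≤ g ω) :
    Ch μ (fun ω => f ω + g ω) ≤ Ch μ f + Ch μ g := by
  -- cutoff representation
  have hmeas : Measurable fun t : ℝ => ENNReal.ofReal (μ {ω | t < f ω + g ω}) :=
    meas_aux hmono _ (antitone_levels _)
  have key : ∀ n : ℕ, (∫⁻ t in Set.Ioc (0:ℝ) (n:ℝ), ENNReal.ofReal (μ {ω | t < f ω + g ω}))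
      ≤ Ch μ f + Ch μ g := by
    intro n
    set fn : Ω → ℝ := fun ω => min (f ω) (2 * n) with hfn
    set gn : Ω → ℝ := fun ω => min (g ω) (2 * n) with hgn
    have hset : ∀ t ∈ Set.Ioc (0:ℝ) (n:ℝ), {ω | t < f ω + g ω} = {ω | t < fn ω + gn ω} := by
      intro t ht
      obtain ⟨ht0, htn⟩ := ht
      ext ω
      simp only [Set.mem_setOf_eq, hfn, hgn]
      constructor
      · intro h
        rcases le_or_gt (f ω) (2 * n) with hf2 | hf2
        · rcases le_or_gt (g ω) (2 * n) with hg2 | hg2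
          · rw [min_eq_left hf2, min_eq_left hg2]; exact h
          · rw [min_eq_right (le_of_lt hg2)]
            have := hf0 ω
            have h2 : (2:ℝ) * n ≥ 2 * t := by
              have : (t:ℝ) ≤ n := htn
              linarith
            linarith [min_le_right (f ω) ((2:ℝ) * n), le_min (hf0 ω) (by positivity : (0:ℝ) ≤ 2 * n)]
        · rw [min_eq_right (le_of_lt hf2)]
          have h2 : (2:ℝ) * n ≥ 2 * t := by
            have : (t:ℝ) ≤ n := htn
            linarith
          have hgn0 : (0:ℝ) ≤ min (g ω) (2 * n) := le_min (hg0 ω) (by positivity)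
          linarith
      · intro h
        have := min_le_left (f ω) ((2:ℝ) * n)
        have := min_le_left (g ω) ((2:ℝ) * n)
        linarith
    calc (∫⁻ t in Set.Ioc (0:ℝ) (n:ℝ), ENNReal.ofReal (μ {ω | t < f ω + g ω}))
        = ∫⁻ t in Set.Ioc (0:ℝ) (n:ℝ), ENNReal.ofReal (μ {ω | t < fn ω + gn ω}) := by
          refine setLIntegral_congr_fun measurableSet_Ioc ?_
          exact fun t ht => by rw [hset t ht]
      _ ≤ ∫⁻ t in Set.Ioi (0:ℝ), ENNReal.ofReal (μ {ω | t < fn ω + gn ω}) :=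
          lintegral_mono_set Set.Ioc_subset_Ioi_self
      _ = Ch μ (fun ω => fn ω + gn ω) := rfl
      _ ≤ Ch μ fn + Ch μ gn :=
          Ch_add_le_of_bounded h0 h1 hmono hsubmod fn gn (2 * n)
            (fun ω => min_le_right _ _)
      _ ≤ Ch μ f + Ch μ g :=
          add_le_add (Ch_mono hmono fun ω => min_le_left _ _)
            (Ch_mono hmono fun ω => min_le_left _ _)
  -- sup over cutoffs
  have hrep : Ch μ (fun ω => f ω + g ω)
      = ⨆ n : ℕ, ∫⁻ t in Set.Ioc (0:ℝ) (n:ℝ), ENNReal.ofReal (μ {ω | t < f ω + g ω}) := by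
    set a : ℝ → ℝ≥0∞ := fun t => ENNReal.ofReal (μ {ω | t < f ω + g ω}) with ha
    have hmono_ind : Monotone fun n : ℕ => (Set.Ioc (0:ℝ) (n:ℝ)).indicator a := by
      intro m n hmn
      apply Set.indicator_le_indicator_of_subset
      · exact Set.Ioc_subset_Ioc le_rfl (by exact_mod_cast hmn)
      · exact fun t => zero_le
    have hsup : ∀ t : ℝ, (⨆ n : ℕ, (Set.Ioc (0:ℝ) (n:ℝ)).indicator a t)
        = (Set.Ioi (0:ℝ)).indicator a t := by
      intro t
      rcases le_or_gt t 0 with ht | ht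
      · rw [Set.indicator_of_notMem (by simpa using ht)]
        simp only [ENNReal.iSup_eq_zero]
        intro n
        rw [Set.indicator_of_notMem]
        simp only [Set.mem_Ioc, not_and_or, not_lt]
        exact Or.inl ht
      · rw [Set.indicator_of_mem (by simpa using ht)]
        apply le_antisymm
        · refine iSup_le fun n => ?_
          by_cases hn : t ∈ Set.Ioc (0:ℝ) (n:ℝ)
          · rw [Set.indicator_of_mem hn]
          · rw [Set.indicator_of_notMem hn]; exact zero_le
        · refine le_iSup_of_le ⌈t⌉₊ ?_
          rw [Set.indicator_of_mem (Set.mem_Ioc.mpr ⟨ht, Nat.le_ceil t⟩)]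
    calc Ch μ (fun ω => f ω + g ω) = ∫⁻ t, (Set.Ioi (0:ℝ)).indicator a t :=
          (lintegral_indicator measurableSet_Ioi a).symm
      _ = ∫⁻ t, ⨆ n : ℕ, (Set.Ioc (0:ℝ) (n:ℝ)).indicator a t := by
          refine lintegral_congr fun t => (hsup t).symm
      _ = ⨆ n : ℕ, ∫⁻ t, (Set.Ioc (0:ℝ) (n:ℝ)).indicator a t := by
          refine lintegral_iSup (fun n => hmeas.indicator measurableSet_Ioc)
            hmono_ind
      _ = ⨆ n : ℕ, ∫⁻ t in Set.Ioc (0:ℝ) (n:ℝ), a t := by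
          refine iSup_congr fun n => lintegral_indicator measurableSet_Ioc a
  rw [hrep]
  exact iSup_le key

include h0 in
lemma Ch_smul_le (f : Ω → ℝ) {c : ℝ} (hc : 0 ≤ c) :
    Ch μ (fun ω => c * f ω) ≤ ENNReal.ofReal c * Ch μ f := by
  rcases eq_or_lt_of_le hc with hc0 | hc0
  · rw [← hc0]
    have : Ch μ (fun ω => (0:ℝ) * f ω) = Ch μ (fun _ => (0:ℝ)) := by
      congr 1; funext ω; ring
    rw [this, Ch_zero h0 hmono]
    exact zero_le
  · have hset : ∀ t : ℝ, {ω | t < c * f ω} = {ω | t / c < f ω} := by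
      intro t; ext ω
      simp only [Set.mem_setOf_eq]
      rw [div_lt_iff₀ hc0, mul_comm]
    have : Ch μ (fun ω => c * f ω)
        = ∫⁻ t in Set.Ioi (0:ℝ), ENNReal.ofReal (μ {ω | t / c < f ω}) := by
      unfold Ch
      refine lintegral_congr fun t => by rw [hset t]
    rw [this]
    exact le_of_eq (scale _ (meas_aux hmono _ (antitone_levels f)) hc0)

include h0 h1 hsubmod in
lemma Ch_weighted_sum_le {ι : Type*} (s : Finset ι) (w : ι → ℝ) (u : ι → Ω → ℝ)
    (hw : ∀ i ∈ s, 0 ≤ w i) (hu : ∀ i ∈ s, ∀ ω, 0 ≤ u i ω) :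
    Ch μ (fun ω => ∑ i ∈ s, w i * u i ω) ≤ ∑ i ∈ s, ENNReal.ofReal (w i) * Ch μ (u i) := by
  classical
  induction s using Finset.cons_induction with
  | empty => simp [Ch_zero h0 hmono]
  | cons a s ha ih =>
    have hwa : 0 ≤ w a := hw a (Finset.mem_cons_self a s)
    have hua : ∀ ω, 0 ≤ u a ω := hu a (Finset.mem_cons_self a s)
    have hw' : ∀ i ∈ s, 0 ≤ w i := fun i hi => hw i (Finset.mem_cons_of_mem hi)
    have hu' : ∀ i ∈ s, ∀ ω, 0 ≤ u i ω := fun i hi => hu i (Finset.mem_cons_of_mem hi)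
    have heq : (fun ω => ∑ i ∈ Finset.cons a s ha, w i * u i ω)
        = fun ω => (w a * u a ω) + ∑ i ∈ s, w i * u i ω := by
      funext ω; rw [Finset.sum_cons]
    rw [heq, Finset.sum_cons]
    calc Ch μ (fun ω => (w a * u a ω) + ∑ i ∈ s, w i * u i ω)
        ≤ Ch μ (fun ω => w a * u a ω) + Ch μ (fun ω => ∑ i ∈ s, w i * u i ω) :=
          Ch_add_le h0 h1 hmono hsubmod _ _ (fun ω => mul_nonneg hwa (hua ω))
            (fun ω => Finset.sum_nonneg fun i hi => mul_nonneg (hw' i hi) (hu' i hi ω))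
      _ ≤ ENNReal.ofReal (w a) * Ch μ (u a) + ∑ i ∈ s, ENNReal.ofReal (w i) * Ch μ (u i) :=
          add_le_add (Ch_smul_le h0 hmono _ hwa) (ih hw' hu')


end

lemma bern_nonneg {n k : ℕ} {x : ℝ} (hx : x ∈ Set.Icc (0:ℝ) 1) : 0 ≤ bern n k x := by
  obtain ⟨hx0, hx1⟩ := hx
  unfold bern
  have h1 : (0:ℝ) ≤ 1 - x := by linarith
  positivity

lemma bern_sum (n : ℕ) (x : ℝ) : ∑ k ∈ Finset.range (n+1), bern n k x = 1 := by
  have h := add_pow x (1 - x) n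
  have h2 : x + (1 - x) = 1 := by ring
  rw [h2, one_pow] at h
  calc ∑ k ∈ Finset.range (n+1), bern n k x
      = ∑ k ∈ Finset.range (n+1), x ^ k * (1-x) ^ (n-k) * (n.choose k : ℝ) := by
        refine Finset.sum_congr rfl fun k _ => ?_
        unfold bern; ring
    _ = 1 := h.symm


end ChoquetAux

open ChoquetAux in
/-- Pointwise Jensen-type estimate for bivariate random Bernstein polynomials
with respect to a submodular capacity. -/
theorem choquet_bernstein_pointwise_estimate
    {Ω : Type*} [MeasurableSpace Ω] (μ : Set Ω → ℝ)
    (h0 : μ ∅ = 0) (h1 : μ Set.univ = 1)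
    (hmono : ∀ A B : Set Ω, A ⊆ B → μ A ≤ μ B)
    (hsubmod : ∀ A B : Set Ω, μ (A ∪ B) + μ (A ∩ B) ≤ μ A + μ B)
    (p : ℝ) (hp : 1 ≤ p) (F : ℝ → ℝ → Ω → ℝ) (hF : ∀ x y, Measurable (F x y))
    (n₁ n₂ : ℕ) (hn₁ : 1 ≤ n₁) (hn₂ : 1 ≤ n₂)
    (x₁ x₂ : ℝ) (hx₁ : x₁ ∈ Set.Icc (0:ℝ) 1) (hx₂ : x₂ ∈ Set.Icc (0:ℝ) 1) :
    choquet μ (fun ω => |F x₁ x₂ ω -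
        ∑ k₁ ∈ Finset.range (n₁+1), ∑ k₂ ∈ Finset.range (n₂+1),
          bern n₁ k₁ x₁ * bern n₂ k₂ x₂ * F ((k₁:ℝ)/n₁) ((k₂:ℝ)/n₂) ω| ^ p) Set.univ
      ≤ ∑ k₁ ∈ Finset.range (n₁+1), ∑ k₂ ∈ Finset.range (n₂+1),
          ENNReal.ofReal (bern n₁ k₁ x₁ * bern n₂ k₂ x₂) *
            choquet μ (fun ω => |F x₁ x₂ ω - F ((k₁:ℝ)/n₁) ((k₂:ℝ)/n₂) ω| ^ p) Set.univ := by
  classical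
  -- reduce `choquet _ _ univ` to `Ch`
  have hCh : ∀ f : Ω → ℝ, choquet μ f Set.univ = Ch μ f := by
    intro f
    unfold choquet Ch
    simp [Set.inter_univ]
  set S : Finset (ℕ × ℕ) := Finset.range (n₁+1) ×ˢ Finset.range (n₂+1) with hS
  set w : ℕ × ℕ → ℝ := fun k => bern n₁ k.1 x₁ * bern n₂ k.2 x₂ with hw
  set u : ℕ × ℕ → Ω → ℝ :=
    fun k ω => |F x₁ x₂ ω - F ((k.1:ℝ)/n₁) ((k.2:ℝ)/n₂) ω| ^ p with hu
  have hwnn : ∀ k ∈ S, 0 ≤ w k := fun k _ =>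
    mul_nonneg (bern_nonneg hx₁) (bern_nonneg hx₂)
  have hw1 : ∑ k ∈ S, w k = 1 := by
    rw [hS, Finset.sum_product]
    simp only [hw]
    rw [← Finset.sum_mul_sum]
    rw [bern_sum, bern_sum, one_mul]
  have hunn : ∀ k ∈ S, ∀ ω, 0 ≤ u k ω := fun k _ ω =>
    Real.rpow_nonneg (abs_nonneg _) p
  -- pointwise Jensen inequality
  have hjensen : ∀ ω, |F x₁ x₂ ω -
      ∑ k₁ ∈ Finset.range (n₁+1), ∑ k₂ ∈ Finset.range (n₂+1),
        bern n₁ k₁ x₁ * bern n₂ k₂ x₂ * F ((k₁:ℝ)/n₁) ((k₂:ℝ)/n₂) ω| ^ p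
      ≤ ∑ k ∈ S, w k * u k ω := by
    intro ω
    set d : ℕ × ℕ → ℝ := fun k => F x₁ x₂ ω - F ((k.1:ℝ)/n₁) ((k.2:ℝ)/n₂) ω with hd
    have hrw : F x₁ x₂ ω -
        ∑ k₁ ∈ Finset.range (n₁+1), ∑ k₂ ∈ Finset.range (n₂+1),
          bern n₁ k₁ x₁ * bern n₂ k₂ x₂ * F ((k₁:ℝ)/n₁) ((k₂:ℝ)/n₂) ω
        = ∑ k ∈ S, w k * d k := by
      have hds : ∑ k ∈ S, w k * d k
          = (∑ k ∈ S, w k) * F x₁ x₂ ω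
            - ∑ k ∈ S, w k * F ((k.1:ℝ)/n₁) ((k.2:ℝ)/n₂) ω := by
        rw [Finset.sum_mul, ← Finset.sum_sub_distrib]
        refine Finset.sum_congr rfl fun k _ => ?_
        rw [hd]; ring
      rw [hds, hw1, one_mul]
      congr 1
      rw [hS, Finset.sum_product]
    rw [hrw]
    have h1' : |∑ k ∈ S, w k * d k| ≤ ∑ k ∈ S, w k * |d k| := by
      refine le_trans (Finset.abs_sum_le_sum_abs _ _) ?_
      refine Finset.sum_le_sum fun k hk => ?_
      rw [abs_mul, abs_of_nonneg (hwnn k hk)]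
    have h2' : |∑ k ∈ S, w k * d k| ^ p ≤ (∑ k ∈ S, w k * |d k|) ^ p :=
      Real.rpow_le_rpow (abs_nonneg _) h1' (le_trans zero_le_one hp)
    refine le_trans h2' ?_
    have h3' := Real.rpow_arith_mean_le_arith_mean_rpow S w (fun k => |d k|)
      hwnn hw1 (fun k _ => abs_nonneg _) hp
    simpa [hu] using h3'
  -- combine
  rw [hCh]
  calc Ch μ (fun ω => |F x₁ x₂ ω -
        ∑ k₁ ∈ Finset.range (n₁+1), ∑ k₂ ∈ Finset.range (n₂+1),
          bern n₁ k₁ x₁ * bern n₂ k₂ x₂ * F ((k₁:ℝ)/n₁) ((k₂:ℝ)/n₂) ω| ^ p)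
      ≤ Ch μ (fun ω => ∑ k ∈ S, w k * u k ω) := Ch_mono hmono hjensen
    _ ≤ ∑ k ∈ S, ENNReal.ofReal (w k) * Ch μ (u k) :=
        Ch_weighted_sum_le h0 h1 hmono hsubmod S w u hwnn hunn
    _ = ∑ k₁ ∈ Finset.range (n₁+1), ∑ k₂ ∈ Finset.range (n₂+1),
          ENNReal.ofReal (bern n₁ k₁ x₁ * bern n₂ k₂ x₂) *
            choquet μ (fun ω => |F x₁ x₂ ω - F ((k₁:ℝ)/n₁) ((k₂:ℝ)/n₂) ω| ^ p) Set.univ := by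
        rw [hS, Finset.sum_product]
        refine Finset.sum_congr rfl fun k₁ _ => Finset.sum_congr rfl fun k₂ _ => ?_
        rw [hCh]
end

section
/- (Moment bound for Bernstein polynomials) For every x ∈ [0,1], n ∈ ℕ and integer j ≥ 0, Σ_{k=0}^{n} p_{k,n}(x) (√n |x − k/n|)^j ≤ 2 G(1 + j/2), where G denotes the Gamma function. -/
open scoped Nat


/-- Hoeffding's lemma for a Bernoulli variable. -/
lemma bernoulli_hoeffding {x : ℝ} (hx0 : 0 ≤ x) (hx1 : x ≤ 1) (t : ℝ) :
    1 - x + x * Real.exp t ≤ Real.exp (x * t + t ^ 2 / 8) := by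
  -- D s = 1 - x + x * exp s > 0
  set D : ℝ → ℝ := fun s => 1 - x + x * Real.exp s with hD_def
  have hD : ∀ s, 0 < D s := by
    intro s
    rcases eq_or_lt_of_le hx0 with h | h
    · simp [hD_def, ← h]
    · have : 0 < x * Real.exp s := mul_pos h (Real.exp_pos s)
      have : (0:ℝ) ≤ 1 - x := by linarith
      simp only [hD_def]; nlinarith [mul_pos h (Real.exp_pos s)]
  set ps0 : ℝ → ℝ := fun s => x * s + s ^ 2 / 8 - Real.log (D s) with hps0_def
  set ps1 : ℝ → ℝ := fun s => x + s / 4 - x * Real.exp s / D s with hps1_def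
  set ps2 : ℝ → ℝ := fun s => 1 / 4 - x * Real.exp s * (1 - x) / (D s) ^ 2 with hps2_def
  have hdD : ∀ s, HasDerivAt D (x * Real.exp s) s := by
    intro s
    exact ((hasDerivAt_const s (1 - x)).add ((Real.hasDerivAt_exp s).const_mul x)).congr_deriv (zero_add _)
  have hdps0 : ∀ s, HasDerivAt ps0 (ps1 s) s := by
    intro s
    have hlog : HasDerivAt (fun s => Real.log (D s)) (x * Real.exp s / D s) s :=
      (hdD s).log (hD s).ne'
    have h1 : HasDerivAt (fun s : ℝ => x * s + s ^ 2 / 8) (x + s * 2 / 8) s := by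
      have := ((hasDerivAt_id s).const_mul x).add
        (((hasDerivAt_pow 2 s)).div_const 8)
      exact this.congr_deriv (by norm_num; ring)
    have := h1.sub hlog
    refine this.congr_deriv ?_
    simp only [hps1_def]; ring
  have hdps1 : ∀ s, HasDerivAt ps1 (ps2 s) s := by
    intro s
    have hnum : HasDerivAt (fun s => x * Real.exp s) (x * Real.exp s) s :=
      (Real.hasDerivAt_exp s).const_mul x
    have hq : HasDerivAt (fun s => x * Real.exp s / D s)
        ((x * Real.exp s * D s - x * Real.exp s * (x * Real.exp s)) / (D s) ^ 2) s :=
      hnum.div (hdD s) (hD s).ne'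
    have h1 : HasDerivAt (fun s : ℝ => x + s / 4) (1 / 4) s := by
      exact ((hasDerivAt_const s x).add ((hasDerivAt_id s).div_const 4)).congr_deriv (zero_add _)
    have := h1.sub hq
    refine this.congr_deriv ?_
    have hDs := (hD s).ne'
    simp only [hps2_def, hD_def]
    field_simp
    ring
  have hps2_nonneg : ∀ s, 0 ≤ ps2 s := by
    intro s
    have hDs := hD s
    have key : x * Real.exp s * (1 - x) * 4 ≤ (D s) ^ 2 := by
      have : (D s) ^ 2 - 4 * ((1 - x) * (x * Real.exp s)) = ((1 - x) - x * Real.exp s) ^ 2 := by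
        simp only [hD_def]; ring
      nlinarith [sq_nonneg ((1 - x) - x * Real.exp s)]
    simp only [hps2_def, hD_def]
    rw [sub_nonneg, div_le_iff₀ (by positivity)]
    nlinarith [sq_nonneg ((1 - x) - x * Real.exp s), Real.exp_pos s]
  have hps1_mono : Monotone ps1 := monotone_of_hasDerivAt_nonneg hdps1 hps2_nonneg
  have hps10 : ps1 0 = 0 := by simp [hps1_def, hD_def]
  have hps00 : ps0 0 = 0 := by simp [hps0_def, hD_def]
  have hps0diff : Differentiable ℝ ps0 := fun y => (hdps0 y).differentiableAt
  have hps0_nonneg : ∀ s, 0 ≤ ps0 s := by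
    intro s
    rcases le_total 0 s with hs | hs
    · have hmono : MonotoneOn ps0 (Set.Ici (0:ℝ)) := by
        apply monotoneOn_of_hasDerivWithinAt_nonneg (convex_Ici 0)
          hps0diff.continuous.continuousOn
          (fun y _ => (hdps0 y).hasDerivWithinAt)
        intro y hy
        rw [interior_Ici] at hy
        have := hps1_mono (le_of_lt hy)
        rw [hps10] at this
        exact this
      have := hmono (Set.self_mem_Ici) (Set.mem_Ici.mpr hs) hs
      rwa [hps00] at this
    · have hanti : AntitoneOn ps0 (Set.Iic (0:ℝ)) := by
        apply antitoneOn_of_hasDerivWithinAt_nonpos (convex_Iic 0)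
          hps0diff.continuous.continuousOn
          (fun y hy => (hdps0 y).hasDerivWithinAt)
        intro y hy
        rw [interior_Iic] at hy
        have := hps1_mono (le_of_lt hy)
        rw [hps10] at this
        exact this
      have := hanti (Set.mem_Iic.mpr hs) Set.self_mem_Iic hs
      rwa [hps00] at this
  have := hps0_nonneg t
  simp only [hps0_def, sub_nonneg] at this
  have hDt : D t ≤ Real.exp (x * t + t ^ 2 / 8) :=
    (Real.log_le_iff_le_exp (hD t)).mp this
  simpa [hD_def] using hDt

lemma bern_nonneg {n k : ℕ} {x : ℝ} (hx0 : 0 ≤ x) (hx1 : x ≤ 1) : 0 ≤ bern n k x := by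
  unfold bern
  have : (0:ℝ) ≤ 1 - x := by linarith
  positivity

lemma bern_mgf_eq (n : ℕ) (x : ℝ) (s : ℝ) :
    ∑ k ∈ Finset.range (n + 1), bern n k x * Real.exp (s * k)
      = (1 - x + x * Real.exp s) ^ n := by
  rw [add_comm (1 - x), add_pow]
  apply Finset.sum_congr rfl
  intro k _
  unfold bern
  rw [mul_pow, ← Real.exp_nat_mul]
  rw [mul_comm s (k:ℝ)]
  ring

lemma bern_mgf_le (n : ℕ) {x : ℝ} (hx0 : 0 ≤ x) (hx1 : x ≤ 1) (s : ℝ) :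
    ∑ k ∈ Finset.range (n + 1), bern n k x * Real.exp (s * ((k:ℝ) - n * x))
      ≤ Real.exp (n * s ^ 2 / 8) := by
  have hterm : ∀ k : ℕ, Real.exp (s * ((k:ℝ) - n * x))
      = Real.exp (s * k) * Real.exp (-(s * (n * x))) := by
    intro k
    rw [← Real.exp_add]; ring_nf
  calc ∑ k ∈ Finset.range (n + 1), bern n k x * Real.exp (s * ((k:ℝ) - n * x))
      = (∑ k ∈ Finset.range (n + 1), bern n k x * Real.exp (s * k))
          * Real.exp (-(s * (n * x))) := by
        rw [Finset.sum_mul]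
        exact Finset.sum_congr rfl fun k _ => by rw [hterm k]; ring
    _ = (1 - x + x * Real.exp s) ^ n * Real.exp (-(s * (n * x))) := by
        rw [bern_mgf_eq]
    _ ≤ Real.exp (x * s + s ^ 2 / 8) ^ n * Real.exp (-(s * (n * x))) := by
        apply mul_le_mul_of_nonneg_right _ (Real.exp_pos _).le
        apply pow_le_pow_left₀ _ (bernoulli_hoeffding hx0 hx1 s) n
        have h1 : 0 ≤ 1 - x := by linarith
        positivity
    _ = Real.exp (n * s ^ 2 / 8) := by
        rw [← Real.exp_nat_mul, ← Real.exp_add]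
        congr 1
        ring

lemma bern_sum_one (n : ℕ) (x : ℝ) :
    ∑ k ∈ Finset.range (n + 1), bern n k x = 1 := by
  have h := bern_mgf_eq n x 0
  simpa using h

lemma pow_le_fact_mul_exp {z : ℝ} (hz : 0 ≤ z) (N : ℕ) : z ^ N ≤ (N ! : ℝ) * Real.exp z := by
  have h := Real.sum_le_exp_of_nonneg hz (N + 1)
  have hsingle : z ^ N / N ! ≤ ∑ i ∈ Finset.range (N + 1), z ^ i / i ! :=
    Finset.single_le_sum (f := fun i => z ^ i / (i ! : ℝ))
      (fun i _ => by positivity) (Finset.self_mem_range_succ N)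
  have h2 := hsingle.trans h
  rw [div_le_iff₀ (by positivity)] at h2
  linarith
lemma even_pow_le (y : ℝ) (m : ℕ) :
    y ^ (2 * m) ≤ ((2 * m)! : ℝ) * (Real.exp y + Real.exp (-y)) := by
  have h1 : y ^ (2 * m) = |y| ^ (2 * m) := by
    rw [pow_abs, abs_of_nonneg ((even_two_mul m).pow_nonneg y)]
  rw [h1]
  refine (pow_le_fact_mul_exp (abs_nonneg y) (2 * m)).trans ?_
  apply mul_le_mul_of_nonneg_left _ (by positivity)
  rcases abs_cases y with ⟨h, _⟩ | ⟨h, _⟩ <;> rw [h] <;>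
    [linarith [(Real.exp_pos (-y)).le]; linarith [(Real.exp_pos y).le]]

lemma two_mul_fact_le (m : ℕ) : ((2 * m)! : ℝ) ≤ (2 * m : ℝ) ^ m * (m ! : ℝ) := by
  induction m with
  | zero => simp
  | succ m ih =>
    have hkey : ((2 * m + 1 : ℝ)) * (2 * m : ℝ) ^ m ≤ ((m : ℝ) + 1) * (2 * m + 2 : ℝ) ^ m := by
      rcases Nat.eq_zero_or_pos m with rfl | hm
      · norm_num
      · have hm1 : (1 : ℝ) ≤ m := by exact_mod_cast hm
        have hmpos : (0:ℝ) < m := by linarith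
        have h2 : (2 : ℝ) ≤ (1 + 1 / m) ^ m := by
          have := one_add_mul_le_pow (a := 1 / (m:ℝ))
            (le_trans (by norm_num) (by positivity : (0:ℝ) ≤ 1 / (m:ℝ))) m
          have hmm : (m : ℝ) * (1 / m) = 1 := by field_simp
          nlinarith [this]
        have hsplit : ((2 * m + 2 : ℝ)) ^ m = (1 + 1/m) ^ m * (2 * m : ℝ) ^ m := by
          rw [← mul_pow]
          congr 1
          field_simp
        have hpowpos : (0:ℝ) < (2 * m : ℝ) ^ m := by positivity
        rw [hsplit]
        nlinarith [hpowpos, h2, mul_le_mul_of_nonneg_right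
          (mul_le_mul_of_nonneg_left h2 (by linarith : (0:ℝ) ≤ (m:ℝ) + 1)) hpowpos.le]
    have hcast : ((2 * (m + 1))! : ℝ)
        = (2 * m + 2 : ℝ) * ((2 * m + 1 : ℝ) * ((2 * m)! : ℝ)) := by
      have : 2 * (m + 1) = (2 * m + 1) + 1 := by ring
      rw [this, Nat.factorial_succ, Nat.factorial_succ]
      push_cast
      ring
    rw [hcast]
    have hgoal : (2 * ((m:ℝ) + 1)) ^ (m + 1) * ((m + 1)! : ℝ)
        = (2 * m + 2 : ℝ) ^ m * ((2 * m + 2 : ℝ) * ((m : ℝ) + 1)) * (m ! : ℝ) := by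
      rw [Nat.factorial_succ]
      push_cast
      ring
    push_cast
    rw [hgoal]
    have h1 : (2 * (m:ℝ) + 1) * ((2 * m)! : ℝ) ≤ (2 * m + 1 : ℝ) * ((2*m:ℝ)^m * (m ! : ℝ)) := by
      apply mul_le_mul_of_nonneg_left ih (by positivity)
    have h2 : (2 * (m:ℝ) + 1) * ((2*m:ℝ)^m * (m ! : ℝ))
        ≤ ((m:ℝ) + 1) * (2 * m + 2 : ℝ) ^ m * (m ! : ℝ) := by
      have := mul_le_mul_of_nonneg_right hkey (by positivity : (0:ℝ) ≤ (m ! : ℝ))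
      nlinarith [this]
    nlinarith [h1, h2, Real.exp_pos 1, (by positivity : (0:ℝ) ≤ ((2*m)! : ℝ))]

lemma bern_even_moment (n : ℕ) (hn : 1 ≤ n) {x : ℝ} (hx0 : 0 ≤ x) (hx1 : x ≤ 1) (m : ℕ) :
    ∑ k ∈ Finset.range (n + 1), bern n k x * (Real.sqrt n * |x - (k:ℝ)/n|) ^ (2 * m)
      ≤ 2 * (m ! : ℝ) * (Real.exp 1 / 4) ^ m := by
  rcases Nat.eq_zero_or_pos m with rfl | hm
  · simpa [bern_sum_one n x] using (by norm_num : (1:ℝ) ≤ 2)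
  have hnpos : (0:ℝ) < n := by exact_mod_cast hn
  have hsn : 0 < Real.sqrt n := Real.sqrt_pos.mpr hnpos
  have hsn2 : Real.sqrt n ^ 2 = (n:ℝ) := Real.sq_sqrt hnpos.le
  set L : ℝ := Real.sqrt (8 * m) with hL_def
  have hL2 : L ^ 2 = 8 * m := Real.sq_sqrt (by positivity)
  have hLpos : 0 < L := Real.sqrt_pos.mpr (by positivity)
  set s : ℝ := L / Real.sqrt n with hs_def
  have hs2 : (n:ℝ) * s ^ 2 / 8 = m := by
    rw [hs_def, div_pow, hL2, hsn2]
    field_simp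
  have hpoint : ∀ k ∈ Finset.range (n + 1),
      bern n k x * (Real.sqrt n * |x - (k:ℝ)/n|) ^ (2 * m)
        ≤ bern n k x * (((2*m)! : ℝ) / L ^ (2*m)
            * (Real.exp ((-s) * ((k:ℝ) - n * x)) + Real.exp (s * ((k:ℝ) - n * x)))) := by
    intro k _
    apply mul_le_mul_of_nonneg_left _ (bern_nonneg hx0 hx1)
    set b : ℝ := Real.sqrt n * (x - (k:ℝ)/n) with hb_def
    have habs : Real.sqrt n * |x - (k:ℝ)/n| = |b| := by
      rw [hb_def, abs_mul, abs_of_nonneg (Real.sqrt_nonneg _)]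
    rw [habs, pow_abs, abs_of_nonneg ((even_two_mul m).pow_nonneg b)]
    have hLb : L * b = (-s) * ((k:ℝ) - n * x) := by
      rw [hb_def, hs_def]
      have : Real.sqrt n * (x - (k:ℝ)/n) = ((n:ℝ) * x - k) / Real.sqrt n := by
        rw [eq_div_iff hsn.ne']
        calc Real.sqrt n * (x - (k:ℝ)/n) * Real.sqrt n
            = Real.sqrt n ^ 2 * (x - (k:ℝ)/n) := by ring
          _ = (n:ℝ) * x - k := by rw [hsn2]; field_simp
      rw [this]
      field_simp
      ring
    have hkey := even_pow_le (L * b) m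
    rw [mul_pow] at hkey
    rw [div_mul_eq_mul_div, le_div_iff₀ (by positivity)]
    calc b ^ (2*m) * L ^ (2*m) = L ^ (2*m) * b ^ (2*m) := by ring
      _ ≤ ((2*m)! : ℝ) * (Real.exp (L*b) + Real.exp (-(L*b))) := hkey
      _ = ((2*m)! : ℝ) * (Real.exp ((-s) * ((k:ℝ) - n * x))
            + Real.exp (s * ((k:ℝ) - n * x))) := by
          rw [hLb]; ring_nf
  have hsum := Finset.sum_le_sum hpoint
  refine hsum.trans ?_
  have hsplit : ∑ k ∈ Finset.range (n + 1), bern n k x * (((2*m)! : ℝ) / L ^ (2*m)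
        * (Real.exp ((-s) * ((k:ℝ) - n * x)) + Real.exp (s * ((k:ℝ) - n * x))))
      = ((2*m)! : ℝ) / L ^ (2*m)
        * ((∑ k ∈ Finset.range (n + 1), bern n k x * Real.exp ((-s) * ((k:ℝ) - n * x)))
          + ∑ k ∈ Finset.range (n + 1), bern n k x * Real.exp (s * ((k:ℝ) - n * x))) := by
    rw [mul_add, Finset.mul_sum, Finset.mul_sum, ← Finset.sum_add_distrib]
    exact Finset.sum_congr rfl fun k _ => by ring
  rw [hsplit]
  have hm1 := bern_mgf_le n hx0 hx1 (-s)
  have hm2 := bern_mgf_le n hx0 hx1 s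
  have hexp1 : (n:ℝ) * (-s) ^ 2 / 8 = m := by rw [neg_pow]; simpa using hs2
  rw [hexp1] at hm1
  rw [hs2] at hm2
  have hexpm : Real.exp (m:ℝ) = Real.exp 1 ^ m := by
    rw [← Real.exp_nat_mul]; norm_num
  have hstep : ((2*m)! : ℝ) / L ^ (2*m)
        * ((∑ k ∈ Finset.range (n + 1), bern n k x * Real.exp ((-s) * ((k:ℝ) - n * x)))
          + ∑ k ∈ Finset.range (n + 1), bern n k x * Real.exp (s * ((k:ℝ) - n * x)))
      ≤ ((2*m)! : ℝ) / L ^ (2*m) * (2 * Real.exp 1 ^ m) := by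
    apply mul_le_mul_of_nonneg_left _ (by positivity)
    rw [← hexpm]
    linarith
  refine hstep.trans ?_
  have hLpow : L ^ (2*m) = (8 * (m:ℝ)) ^ m := by
    rw [pow_mul, hL2]
  rw [hLpow, div_mul_eq_mul_div, div_le_iff₀ (by positivity)]
  have h8 : ((8 * (m:ℝ)))^m = 4^m * (2 * (m:ℝ))^m := by
    rw [← mul_pow]; congr 1; ring
  have hkey := two_mul_fact_le m
  have hepos : (0:ℝ) < Real.exp 1 ^ m := by positivity
  calc ((2*m)! : ℝ) * (2 * Real.exp 1 ^ m)
      ≤ ((2 * (m:ℝ))^m * (m ! : ℝ)) * (2 * Real.exp 1 ^ m) := by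
        apply mul_le_mul_of_nonneg_right hkey (by positivity)
    _ = 2 * (m ! : ℝ) * (Real.exp 1 / 4) ^ m * (4 ^ m * (2 * (m:ℝ))^m) := by
        rw [div_pow]
        have h4 : (4:ℝ)^m ≠ 0 := by positivity
        field_simp
    _ = 2 * (m ! : ℝ) * (Real.exp 1 / 4) ^ m * (8 * (m:ℝ)) ^ m := by rw [h8]

lemma Gamma_nat_add_half (m : ℕ) :
    Real.Gamma ((m:ℝ) + 3/2)
      = ((2*m+1)! : ℝ) * Real.sqrt Real.pi / (4 ^ m * (m ! : ℝ) * 2) := by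
  induction m with
  | zero =>
    have h : ((0:ℕ):ℝ) + 3/2 = 1/2 + 1 := by norm_num
    rw [h, Real.Gamma_add_one (by norm_num), Real.Gamma_one_half_eq]
    norm_num
    ring
  | succ m ih =>
    have h : ((m+1:ℕ):ℝ) + 3/2 = ((m:ℝ) + 3/2) + 1 := by push_cast; ring
    rw [h, Real.Gamma_add_one (by positivity), ih]
    have hfac : ((2*(m+1)+1)! : ℝ) = (2*(m:ℝ)+3) * ((2*(m:ℝ)+2) * ((2*m+1)! : ℝ)) := by
      have : 2*(m+1)+1 = (2*m+2) + 1 := by ring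
      rw [this, Nat.factorial_succ]
      have : 2*m+2 = (2*m+1) + 1 := by ring
      rw [this, Nat.factorial_succ]
      push_cast; ring
    have hfacm : (((m+1):ℕ)! : ℝ) = ((m:ℝ)+1) * (m ! : ℝ) := by
      rw [Nat.factorial_succ]; push_cast; ring
    rw [hfac, hfacm]
    have h1 : (0:ℝ) < 4 ^ m := by positivity
    have h2 : (0:ℝ) < (m ! : ℝ) := by positivity
    rw [pow_succ]
    field_simp
    ring

lemma fact_pi_ineq (m : ℕ) :
    ((m ! : ℝ)) ^ 3 * (((m+1):ℕ)! : ℝ) * Real.exp 1 ^ (2*m+1)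
      ≤ Real.pi * (((2*m+1)! : ℝ)) ^ 2 := by
  induction m with
  | zero =>
    simp
    nlinarith [Real.exp_one_lt_d9, Real.pi_gt_d6]
  | succ m ih =>
    have hL : ((((m+1):ℕ)!:ℝ)) ^ 3 * ((((m+2):ℕ))! : ℝ) * Real.exp 1 ^ (2*(m+1)+1)
        = (((m ! : ℝ)) ^ 3 * (((m+1):ℕ)! : ℝ) * Real.exp 1 ^ (2*m+1))
          * (((m:ℝ)+1) ^ 3 * ((m:ℝ)+2) * Real.exp 1 ^ 2) := by
      have e1 : (((m+1):ℕ)! : ℝ) = ((m:ℝ)+1) * (m ! : ℝ) := by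
        rw [Nat.factorial_succ]; push_cast; ring
      have e2 : ((((m+2):ℕ))! : ℝ) = ((m:ℝ)+2) * ((((m+1):ℕ))! : ℝ) := by
        have : m + 2 = (m+1) + 1 := by ring
        rw [this, Nat.factorial_succ]; push_cast; ring
      rw [e1, e2, e1]
      have hexp : 2*(m+1)+1 = (2*m+1) + 2 := by ring
      rw [hexp, pow_add]
      push_cast
      ring
    have hR : Real.pi * (((2*(m+1)+1)! : ℝ)) ^ 2
        = (Real.pi * (((2*m+1)! : ℝ)) ^ 2) * (((2*(m:ℝ)+3) * (2*(m:ℝ)+2)) ^ 2) := by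
      have : ((2*(m+1)+1)! : ℝ) = (2*(m:ℝ)+3) * ((2*(m:ℝ)+2) * ((2*m+1)! : ℝ)) := by
        have h1 : 2*(m+1)+1 = (2*m+2) + 1 := by ring
        rw [h1, Nat.factorial_succ]
        have h2 : 2*m+2 = (2*m+1) + 1 := by ring
        rw [h2, Nat.factorial_succ]
        push_cast; ring
      rw [this]; ring
    rw [hL, hR]
    have hratio : ((m:ℝ)+1) ^ 3 * ((m:ℝ)+2) * Real.exp 1 ^ 2
        ≤ ((2*(m:ℝ)+3) * (2*(m:ℝ)+2)) ^ 2 := by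
      have he : Real.exp 1 ≤ 4 := by nlinarith [Real.exp_one_lt_d9]
      have he2 : Real.exp 1 ^ 2 ≤ 16 := by nlinarith [Real.exp_pos 1]
      have hP : (0:ℝ) ≤ ((m:ℝ)+1)^3 * ((m:ℝ)+2) := by positivity
      have h16 : (0:ℝ) ≤ 16 - Real.exp 1 ^ 2 := by linarith
      nlinarith [mul_nonneg hP h16, sq_nonneg ((m:ℝ)+1)]
    have hLpos : (0:ℝ) ≤ ((m:ℝ)+1) ^ 3 * ((m:ℝ)+2) * Real.exp 1 ^ 2 := by positivity
    have hRpos : (0:ℝ) ≤ Real.pi * (((2*m+1)! : ℝ)) ^ 2 := by positivity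
    calc (((m ! : ℝ)) ^ 3 * (((m+1):ℕ)! : ℝ) * Real.exp 1 ^ (2*m+1))
          * (((m:ℝ)+1) ^ 3 * ((m:ℝ)+2) * Real.exp 1 ^ 2)
        ≤ (Real.pi * (((2*m+1)! : ℝ)) ^ 2) * (((m:ℝ)+1) ^ 3 * ((m:ℝ)+2) * Real.exp 1 ^ 2) :=
          mul_le_mul_of_nonneg_right ih hLpos
      _ ≤ (Real.pi * (((2*m+1)! : ℝ)) ^ 2) * (((2*(m:ℝ)+3) * (2*(m:ℝ)+2)) ^ 2) :=
          mul_le_mul_of_nonneg_left hratio hRpos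


/-- (Adell–Bustamante–Quesada moment bound) For `x ∈ [0,1]`,
`Σ_k p_{k,n}(x) (√n |x − k/n|)^j ≤ 2 Γ(1 + j/2)`. -/
theorem bernstein_moment_bound (n : ℕ) (hn : 1 ≤ n) (x : ℝ)
    (hx : x ∈ Set.Icc (0:ℝ) 1) (j : ℕ) :
    ∑ k ∈ Finset.range (n + 1),
        bern n k x * (Real.sqrt n * |x - (k:ℝ)/n|) ^ j
      ≤ 2 * Real.Gamma (1 + (j:ℝ)/2) := by
  obtain ⟨hx0, hx1⟩ := hx
  rcases Nat.even_or_odd j with ⟨m, rfl⟩ | ⟨m, rfl⟩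
  · -- even case : j = m + m = 2 * m
    have h2m : m + m = 2 * m := (two_mul m).symm
    rw [h2m]
    have hΓ : Real.Gamma (1 + ((2*m:ℕ):ℝ)/2) = (m ! : ℝ) := by
      have h : 1 + ((2*m:ℕ):ℝ)/2 = (m:ℝ) + 1 := by push_cast; ring
      rw [h, Real.Gamma_nat_eq_factorial]
    rw [hΓ]
    refine (bern_even_moment n hn hx0 hx1 m).trans ?_
    have hq : (Real.exp 1 / 4) ^ m ≤ 1 := by
      apply pow_le_one₀ (by positivity)
      nlinarith [Real.exp_one_lt_d9]
    have hf : (0:ℝ) < (m ! : ℝ) := by positivity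
    nlinarith [hq, hf]
  · -- odd case : j = 2 * m + 1
    set T : ℕ → ℝ := fun k => Real.sqrt n * |x - (k:ℝ)/n| with hT_def
    have hT : ∀ k, 0 ≤ T k := fun k =>
      mul_nonneg (Real.sqrt_nonneg _) (abs_nonneg _)
    have hb : ∀ k, 0 ≤ bern n k x := fun k => bern_nonneg hx0 hx1
    set S : ℝ := ∑ k ∈ Finset.range (n + 1), bern n k x * T k ^ (2*m+1) with hS_def
    have hSnonneg : 0 ≤ S := Finset.sum_nonneg fun k _ =>
      mul_nonneg (hb k) (pow_nonneg (hT k) _)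
    have hcs := Finset.sum_mul_sq_le_sq_mul_sq (Finset.range (n+1))
      (fun k => Real.sqrt (bern n k x) * T k ^ m)
      (fun k => Real.sqrt (bern n k x) * T k ^ (m+1))
    have hfg : ∀ k, (Real.sqrt (bern n k x) * T k ^ m) * (Real.sqrt (bern n k x) * T k ^ (m+1))
        = bern n k x * T k ^ (2*m+1) := by
      intro k
      have : Real.sqrt (bern n k x) * Real.sqrt (bern n k x) = bern n k x :=
        Real.mul_self_sqrt (hb k)
      calc (Real.sqrt (bern n k x) * T k ^ m) * (Real.sqrt (bern n k x) * T k ^ (m+1))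
          = (Real.sqrt (bern n k x) * Real.sqrt (bern n k x)) * (T k ^ m * T k ^ (m+1)) := by ring
        _ = bern n k x * T k ^ (2*m+1) := by rw [this, ← pow_add]; congr 2; ring
    have hf2 : ∀ k, (Real.sqrt (bern n k x) * T k ^ m) ^ 2 = bern n k x * T k ^ (2*m) := by
      intro k
      rw [mul_pow, Real.sq_sqrt (hb k), ← pow_mul]
      congr 2
      ring
    have hg2 : ∀ k, (Real.sqrt (bern n k x) * T k ^ (m+1)) ^ 2
        = bern n k x * T k ^ (2*(m+1)) := by
      intro k
      rw [mul_pow, Real.sq_sqrt (hb k), ← pow_mul]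
      congr 2
      ring
    simp only [hfg, hf2, hg2] at hcs
    have hA := bern_even_moment n hn hx0 hx1 m
    have hB := bern_even_moment n hn hx0 hx1 (m+1)
    have hApos : 0 ≤ ∑ k ∈ Finset.range (n + 1), bern n k x * T k ^ (2*m) :=
      Finset.sum_nonneg fun k _ => mul_nonneg (hb k) (pow_nonneg (hT k) _)
    have hS2 : S ^ 2 ≤ (2 * (m ! : ℝ) * (Real.exp 1 / 4) ^ m)
        * (2 * ((m+1)! : ℝ) * (Real.exp 1 / 4) ^ (m+1)) := by
      refine le_trans hcs ?_
      have hBpos : 0 ≤ ∑ k ∈ Finset.range (n + 1), bern n k x * T k ^ (2*(m+1)) :=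
        Finset.sum_nonneg fun k _ => mul_nonneg (hb k) (pow_nonneg (hT k) _)
      apply mul_le_mul hA hB hBpos (by positivity)
    -- Gamma value
    have hΓarg : 1 + ((2*m+1:ℕ):ℝ)/2 = (m:ℝ) + 3/2 := by push_cast; ring
    rw [hΓarg, Gamma_nat_add_half m]
    set R : ℝ := 2 * (((2*m+1)! : ℝ) * Real.sqrt Real.pi / (4 ^ m * (m ! : ℝ) * 2)) with hR_def
    have hRnonneg : 0 ≤ R := by
      simp only [hR_def]
      positivity
    have hR2 : R ^ 2 = ((2*m+1)! : ℝ)^2 * Real.pi / (16 ^ m * (m ! : ℝ)^2) := by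
      have h16 : ((4:ℝ)^m)^2 = 16^m := by
        rw [← pow_mul, mul_comm, pow_mul]
        norm_num
      have hpi : Real.sqrt Real.pi ^ 2 = Real.pi := Real.sq_sqrt Real.pi_pos.le
      have h4 : (0:ℝ) < 4 ^ m := by positivity
      have hf : (0:ℝ) < (m ! : ℝ) := by positivity
      have h16' : (0:ℝ) < (16:ℝ) ^ m := by positivity
      have hden : ((4:ℝ)^m * (m ! : ℝ) * 2)^2 = 16^m * (m ! : ℝ)^2 * 4 := by
        rw [mul_pow, mul_pow, h16]; ring
      rw [hR_def, mul_pow, div_pow, mul_pow, hpi, hden]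
      field_simp
      ring
    have hnum : (2 * (m ! : ℝ) * (Real.exp 1 / 4) ^ m)
        * (2 * ((m+1)! : ℝ) * (Real.exp 1 / 4) ^ (m+1)) ≤ R ^ 2 := by
      rw [hR2]
      have hq : (Real.exp 1 / 4) ^ m * (Real.exp 1 / 4) ^ (m+1)
          = Real.exp 1 ^ (2*m+1) / (16^m * 4) := by
        rw [← pow_add, div_pow]
        congr 1
        · congr 1; ring
        · rw [show m + (m+1) = 2*m+1 from by ring, pow_succ, pow_mul]
          norm_num
      calc (2 * (m ! : ℝ) * (Real.exp 1 / 4) ^ m)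
            * (2 * ((m+1)! : ℝ) * (Real.exp 1 / 4) ^ (m+1))
          = 4 * (m ! : ℝ) * ((m+1)! : ℝ) * ((Real.exp 1 / 4) ^ m * (Real.exp 1 / 4) ^ (m+1)) := by
            ring
        _ = 4 * (m ! : ℝ) * ((m+1)! : ℝ) * (Real.exp 1 ^ (2*m+1) / (16^m * 4)) := by rw [hq]
        _ ≤ ((2*m+1)! : ℝ)^2 * Real.pi / (16 ^ m * (m ! : ℝ)^2) := by
            rw [← mul_div_assoc, div_le_div_iff₀ (by positivity) (by positivity)]
            nlinarith [mul_le_mul_of_nonneg_right (fact_pi_ineq m)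
              (by positivity : (0:ℝ) ≤ (16:ℝ)^m * ((16:ℝ)^m * 4)),
              (by positivity : (0:ℝ) < (16:ℝ)^m)]
    have hfinal : S ^ 2 ≤ R ^ 2 := hS2.trans hnum
    calc S = Real.sqrt (S ^ 2) := (Real.sqrt_sq hSnonneg).symm
      _ ≤ Real.sqrt (R ^ 2) := Real.sqrt_le_sqrt hfinal
      _ = R := Real.sqrt_sq hRnonneg
end
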